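/- arXiv:0802.3865 — 9 statements merged into one kernel-verified Lean document; each statement's English description precedes it below -/
import Mathlib

section
/- Let L be a Lie-like algebra^{2-nd} induced by a set S, and for k ∈ S define r_k(x)(a) := ⟨a, x⟩_k and ℓ_k(x)(a) := ⟨x, a⟩_k. Then (L, {−r_k}, {ℓ_k}_{k∈S}) is an ordinary L-module, i.e., setting f_k := −r_k and g_k := ℓ_k, all five module axioms hold. -/
/-- The adjoint module: (L, {−r_k}, {ℓ_k}) is an ordinary module over a
    Lie-like algebra^{2-nd} L, where r_k(x)(a) = ⟨a,x⟩_k and ℓ_k(x)(a) = ⟨x,a⟩_k. -/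
theorem stmt_3 {K : Type*} [Field K] {S : Type*} [Nonempty S]
    {L : Type*} [AddCommGroup L] [Module K L]
    (br : S → L →ₗ[K] L →ₗ[K] L)
    (hjac : ∀ (s h : S) (x y z : L),
      br h (br s x y) z = br s x (br h y z) + br s (br h x z) y)
    (hsw : ∀ (s h : S) (x y z : L), br h (br s x y) z = br s (br h x y) z)
    (f g : S → L → Module.End K L)
    (hfdef : ∀ (k : S) (x : L), f k x = -((br k).flip x))
    (hgdef : ∀ (k : S) (x : L), g k x = br k x) :
    (∀ (h k : S) (x y : L), f h (br k x y) = f h x * f k y - f k y * f h x) ∧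
    (∀ (h k : S) (x y : L), g h (br k x y) = g h x * f k y - f k y * g h x) ∧
    (∀ (h k : S) (x y : L),
      g k x * g h y = g h x * f k y ∧ g h x * f k y = g k x * f h y) ∧
    (∀ (h k : S) (x y : L), f k x * f h y = f h x * f k y) ∧
    (∀ (h k : S) (x y : L), f k x * g h y = f h x * g k y) := by
  have star : ∀ (s h : S) (x y z : L),
      br s x (br h y z) = br s (br h x y) z - br s (br h x z) y := by
    intro s h x y z
    have j := hjac s h x y z
    rw [hsw s h x y z] at j
    rw [eq_sub_iff_add_eq]
    exact j.symm
  have anti : ∀ (s h : S) (x y z : L),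
      br s x (br h z y) = - br s x (br h y z) := by
    intro s h x y z
    rw [star, star]
    abel
  refine ⟨?_, ?_, fun h k x y => ⟨?_, ?_⟩, ?_, ?_⟩
  · intro h k x y
    ext a
    simp only [hfdef, Module.End.mul_apply, LinearMap.sub_apply, LinearMap.neg_apply,
      LinearMap.flip_apply, map_neg, neg_neg]
    rw [star h k a x y, hsw k h a x y]
    abel
  · intro h k x y
    ext a
    simp only [hfdef, hgdef, Module.End.mul_apply, LinearMap.sub_apply, LinearMap.neg_apply,
      LinearMap.flip_apply, map_neg, neg_neg]
    rw [hjac h k x a y]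
    abel
  · ext a
    simp only [hfdef, hgdef, Module.End.mul_apply, LinearMap.neg_apply,
      LinearMap.flip_apply, map_neg]
    rw [← anti h k x a y, star k h x y a, star h k x y a, hsw k h x y a, hsw k h x a y]
  · ext a
    simp only [hfdef, hgdef, Module.End.mul_apply, LinearMap.neg_apply,
      LinearMap.flip_apply, map_neg]
    rw [← anti h k x a y, ← anti k h x a y, star h k x y a, star k h x y a,
      hsw k h x y a, hsw k h x a y]
  · intro h k x y
    ext a
    simp only [hfdef, Module.End.mul_apply, LinearMap.neg_apply, LinearMap.flip_apply,
      map_neg, neg_neg]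
    exact hsw h k a y x
  · intro h k x y
    ext a
    simp only [hfdef, hgdef, Module.End.mul_apply, LinearMap.neg_apply, LinearMap.flip_apply,
      map_neg]
    exact congrArg Neg.neg (hsw h k y a x)
end

section
/- Let (V, {f_k}, {g_k}_{k∈S}) be an ordinary module over a Lie-like algebra^{2-nd} L. Then the plus annihilator V^{ann,+} := span{ (g_h(x) − f_k(x))(v) : x ∈ L, v ∈ V, h, k ∈ S } is an ordinary submodule of V, i.e., it is invariant under f_k(x) and g_k(x) for all x ∈ L and k ∈ S. -/
/-- The plus annihilator of an ordinary module is an ordinary submodule. -/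
theorem stmt_4 {K : Type*} [Field K] {S : Type*} [Nonempty S]
    {L : Type*} [AddCommGroup L] [Module K L]
    {V : Type*} [AddCommGroup V] [Module K V]
    (br : S → L →ₗ[K] L →ₗ[K] L)
    (hjac : ∀ (s h : S) (x y z : L),
      br h (br s x y) z = br s x (br h y z) + br s (br h x z) y)
    (hsw : ∀ (s h : S) (x y z : L), br h (br s x y) z = br s (br h x y) z)
    (f g : S → L →ₗ[K] Module.End K V)
    (hf : ∀ (h k : S) (x y : L), f h (br k x y) = f h x * f k y - f k y * f h x)
    (hg : ∀ (h k : S) (x y : L), g h (br k x y) = g h x * f k y - f k y * g h x)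
    (hgg : ∀ (h k : S) (x y : L),
      g k x * g h y = g h x * f k y ∧ g h x * f k y = g k x * f h y)
    (hff : ∀ (h k : S) (x y : L), f k x * f h y = f h x * f k y)
    (hfg : ∀ (h k : S) (x y : L), f k x * g h y = f h x * g k y) :
    ∀ v ∈ Submodule.span K
        {w : V | ∃ (s t : S) (y : L) (v' : V), w = (g s y - f t y) v'},
      ∀ (k : S) (x : L),
        f k x v ∈ Submodule.span K
          {w : V | ∃ (s t : S) (y : L) (v' : V), w = (g s y - f t y) v'} ∧
        g k x v ∈ Submodule.span K
          {w : V | ∃ (s t : S) (y : L) (v' : V), w = (g s y - f t y) v'} := by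
  set P := Submodule.span K
      {w : V | ∃ (s t : S) (y : L) (v' : V), w = (g s y - f t y) v'} with hP
  have hgen : ∀ (s t : S) (y : L) (v' : V), (g s y - f t y) v' ∈ P := fun s t y v' =>
    Submodule.subset_span ⟨s, t, y, v', rfl⟩
  have hgmem : ∀ v ∈ P, ∀ (k : S) (x : L), g k x v ∈ P := by
    intro v hv
    refine Submodule.span_induction ?_ ?_ ?_ ?_ hv
    · rintro w ⟨s, t, y, v', rfl⟩ k x
      have e1 : g k x * g s y = g s x * f k y := (hgg s k x y).1
      have e2 : g k x * f t y = g t x * f k y := ((hgg t k x y).2).symm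
      have key : g k x ((g s y - f t y) v')
          = (g s x - f k x) (f k y v') - (g t x - f k x) (f k y v') := by
        have h1 : g k x (g s y v') = g s x (f k y v') := by
          have := congrArg (fun (A : Module.End K V) => A v') e1
          simpa [Module.End.mul_apply] using this
        have h2 : g k x (f t y v') = g t x (f k y v') := by
          have := congrArg (fun (A : Module.End K V) => A v') e2
          simpa [Module.End.mul_apply] using this
        simp [LinearMap.sub_apply, map_sub, h1, h2]
      rw [key]
      exact sub_mem (hgen s k x (f k y v')) (hgen t k x (f k y v'))
    · intro k x; simp only [map_zero]; exact Submodule.zero_mem P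
    · intro a b _ _ ha hb k x
      simpa [map_add] using Submodule.add_mem P (ha k x) (hb k x)
    · intro c a _ ha k x
      simpa [map_smul] using Submodule.smul_mem P c (ha k x)
  intro v hv k x
  have hgv : g k x v ∈ P := hgmem v hv k x
  have hfv : f k x v ∈ P := by
    have : f k x v = g k x v - (g k x - f k x) v := by
      simp [LinearMap.sub_apply]
    rw [this]
    exact sub_mem hgv (hgen k k x v)
  exact ⟨hfv, hgv⟩
end

section
/- Let V be a finite-dimensional vector space over a field k of characteristic 0, let 𝒢 and 𝒜 be subspaces of gl(V) with [𝒜, X] ⊆ 𝒜 for every X ∈ 𝒢, and let φ : 𝒜 → k be a linear functional. Then the joint eigenspace U := { u ∈ V : A(u) = φ(A) u for all A ∈ 𝒜 } is invariant under 𝒢, i.e., X(U) ⊆ U for all X ∈ 𝒢. -/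
/-- If 𝒢 normalizes 𝒜 in gl(V), the joint eigenspace of 𝒜 with eigenvalue
    functional φ is invariant under 𝒢. -/
theorem stmt_5 {K : Type*} [Field K] [CharZero K]
    {V : Type*} [AddCommGroup V] [Module K V] [FiniteDimensional K V]
    (G A : Submodule K (Module.End K V))
    (hnorm : ∀ X ∈ G, ∀ a ∈ A, a * X - X * a ∈ A)
    (φ : A →ₗ[K] K) :
    ∀ X ∈ G, ∀ u : V,
      (∀ a : A, (a : Module.End K V) u = φ a • u) →
      ∀ a : A, (a : Module.End K V) (X u) = φ a • (X u) := by
  intro X hX u hu a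
  by_cases hu0 : u = 0
  · simp [hu0]
  set Wlt : ℕ → Submodule K V := fun n => Submodule.span K ((fun i => (X ^ i) u) '' Set.Iio n)
    with hWlt
  have hmono : Monotone Wlt := by
    intro m n hmn
    exact Submodule.span_mono (Set.image_mono (Set.Iio_subset_Iio hmn))
  have hgen : ∀ i n, i < n → (X ^ i) u ∈ Wlt n := fun i n hin =>
    Submodule.subset_span ⟨i, hin, rfl⟩
  have hW0 : Wlt 0 = ⊥ := by
    have he : (fun i => (X ^ i) u) '' Set.Iio 0 = ∅ := by
      simp [Set.eq_empty_iff_forall_notMem]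
    simp only [hWlt, he, Submodule.span_empty]
  have L3 : ∀ n v, v ∈ Wlt n → X v ∈ Wlt (n+1) := by
    intro n v hv
    have h : Wlt n ≤ (Wlt (n+1)).comap X := by
      rw [hWlt]
      refine Submodule.span_le.mpr ?_
      rintro _ ⟨i, hi, rfl⟩
      rw [Set.mem_Iio] at hi
      show X ((X ^ i) u) ∈ Submodule.span K ((fun i => (X ^ i) u) '' Set.Iio (n+1))
      have hXi : X ((X ^ i) u) = (X ^ (i+1)) u := by rw [pow_succ', Module.End.mul_apply]
      rw [hXi]
      exact Submodule.subset_span ⟨i+1, Set.mem_Iio.mpr (by omega), rfl⟩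
    exact h hv
  have claim : ∀ n (b : A), (b : Module.End K V) ((X ^ n) u) - φ b • (X ^ n) u ∈ Wlt n := by
    intro n
    induction n with
    | zero => intro b; simp [hu b]
    | succ n ih =>
      intro b
      set c : A := ⟨(b : Module.End K V) * X - X * (b : Module.End K V), hnorm X hX b b.2⟩
        with hc
      have key : (b : Module.End K V) ((X ^ (n+1)) u)
          = X ((b : Module.End K V) ((X ^ n) u)) + (c : Module.End K V) ((X ^ n) u) := by
        simp only [hc, LinearMap.sub_apply, Module.End.mul_apply, pow_succ']
        abel
      have h1 : X ((b : Module.End K V) ((X ^ n) u))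
          = φ b • (X ^ (n+1)) u + X ((b : Module.End K V) ((X ^ n) u) - φ b • (X ^ n) u) := by
        rw [map_sub, map_smul]
        have hXn : X ((X ^ n) u) = (X ^ (n+1)) u := by
          rw [pow_succ', Module.End.mul_apply]
        rw [hXn]; abel
      have h2 := L3 n _ (ih b)
      have h3 : (c : Module.End K V) ((X ^ n) u) - φ c • (X ^ n) u ∈ Wlt (n+1) :=
        hmono (Nat.le_succ n) (ih c)
      have h4 : φ c • (X ^ n) u ∈ Wlt (n+1) :=
        Submodule.smul_mem _ _ (hgen n (n+1) (by omega))
      have h5 : (c : Module.End K V) ((X ^ n) u) ∈ Wlt (n+1) := by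
        have := Submodule.add_mem _ h3 h4
        simpa using this
      rw [key, h1]
      have heq : φ b • (X ^ (n+1)) u + X ((b : Module.End K V) ((X ^ n) u) - φ b • (X ^ n) u)
          + (c : Module.End K V) ((X ^ n) u) - φ b • (X ^ (n+1)) u
          = X ((b : Module.End K V) ((X ^ n) u) - φ b • (X ^ n) u)
            + (c : Module.End K V) ((X ^ n) u) := by abel
      rw [heq]
      exact Submodule.add_mem _ h2 h5
  have L2 : ∀ (b : A) n v, v ∈ Wlt (n+1) → (b : Module.End K V) v - φ b • v ∈ Wlt n := by
    intro b n v hv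
    set f : Module.End K V := (b : Module.End K V) - φ b • 1 with hf
    have hfv : f v = (b : Module.End K V) v - φ b • v := by simp [hf]
    rw [← hfv]
    have h : Wlt (n+1) ≤ (Wlt n).comap f := by
      rw [hWlt]
      refine Submodule.span_le.mpr ?_
      rintro _ ⟨i, hi, rfl⟩
      rw [Set.mem_Iio] at hi
      show f ((X ^ i) u) ∈ Submodule.span K ((fun i => (X ^ i) u) '' Set.Iio n)
      have hfi : f ((X ^ i) u) = (b : Module.End K V) ((X ^ i) u) - φ b • (X ^ i) u := by
        simp [hf]
      rw [hfi]
      have hm := hmono (by omega : i ≤ n) (claim i b)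
      rw [hWlt] at hm
      exact hm
    exact h hv
  have L4 : ∀ (b : A) n v, v ∈ Wlt n → (b : Module.End K V) v ∈ Wlt n := by
    intro b n v hv
    rcases n with _ | n
    · rw [hW0] at hv ⊢; simp_all
    · have h1 := L2 b n v hv
      have h2 : φ b • v ∈ Wlt (n+1) := Submodule.smul_mem _ _ hv
      have := Submodule.add_mem _ (hmono (Nat.le_succ n) h1) h2
      simpa using this
  obtain ⟨n₀, hn₀⟩ := monotone_stabilizes_iff_noetherian.mpr inferInstance ⟨Wlt, hmono⟩
  set N := n₀ + 1 with hN
  have hstab : Wlt (N + 1) = Wlt N := by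
    have h1 := hn₀ (N+1) (by omega)
    have h2 := hn₀ N (by omega)
    simp only [OrderHom.coe_mk] at h1 h2
    exact h1.symm.trans h2
  set p : Submodule K V := Wlt N with hp
  have hup : u ∈ p := by
    have h := hgen 0 N (by omega)
    simpa using h
  have hXp : ∀ v ∈ p, X v ∈ p := fun v hv => hstab ▸ L3 N v hv
  have hbp : ∀ (b : A), ∀ v ∈ p, (b : Module.End K V) v ∈ p := fun b v hv => L4 b N v hv
  set Xr : Module.End K p := X.restrict hXp with hXr
  set ar : A → Module.End K p := fun b => (b : Module.End K V).restrict (hbp b) with har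
  have nilp : ∀ (b : A), LinearMap.trace K p (ar b) = φ b * Module.finrank K p := by
    intro b
    set d : Module.End K p := ar b - φ b • 1 with hd
    have aux : ∀ m (v : p), (v : V) ∈ Wlt m → ((d ^ m) v : V) ∈ Wlt 0 := by
      intro m
      induction m with
      | zero => intro v hv; simpa using hv
      | succ m ih =>
        intro v hv
        have hdv : ((d v : p) : V) = (b : Module.End K V) v - φ b • (v : V) := by
          simp [hd, har, LinearMap.restrict_apply]
        have h1 : ((d v : p) : V) ∈ Wlt m := by rw [hdv]; exact L2 b m v hv
        have h2 := ih (d v) h1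
        have h3 : (d ^ (m+1)) v = (d ^ m) (d v) := by
          rw [pow_succ, Module.End.mul_apply]
        rw [h3]
        exact h2
    have hdN : d ^ N = 0 := by
      ext v
      have h1 := aux N v v.2
      rw [hW0] at h1
      simpa using (Submodule.mem_bot K).mp h1
    have htr : LinearMap.trace K p d = 0 :=
      (LinearMap.isNilpotent_trace_of_isNilpotent ⟨N, hdN⟩).eq_zero
    have hsum : LinearMap.trace K p (ar b)
        = LinearMap.trace K p d + φ b * Module.finrank K p := by
      rw [hd, map_sub, map_smul, LinearMap.trace_one, smul_eq_mul]
      ring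
    rw [hsum, htr, zero_add]
  set b : A := ⟨(a : Module.End K V) * X - X * (a : Module.End K V), hnorm X hX a a.2⟩ with hb
  have hcomm : ar b = ar a * Xr - Xr * ar a := by
    ext v
    simp [har, hXr, hb, LinearMap.restrict_apply, Module.End.mul_apply]
  have htrb : LinearMap.trace K p (ar b) = 0 := by
    rw [hcomm, map_sub, LinearMap.trace_mul_comm, sub_self]
  have hrank : ((Module.finrank K p : K)) ≠ 0 := by
    have hnt : Nontrivial p := ⟨⟨⟨u, hup⟩, 0, by simp [Subtype.ext_iff, hu0]⟩⟩
    have hpos : 0 < Module.finrank K p := Module.finrank_pos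
    exact_mod_cast Nat.cast_ne_zero.mpr hpos.ne'
  have hφb : φ b = 0 := by
    have h0 := nilp b
    rw [htrb] at h0
    rcases mul_eq_zero.mp h0.symm with h | h
    · exact h
    · exact absurd h hrank
  have hfinal : (a : Module.End K V) (X u)
      = X ((a : Module.End K V) u) + (b : Module.End K V) u := by
    simp only [hb, LinearMap.sub_apply, Module.End.mul_apply]
    abel
  rw [hfinal, hu a, hu b, hφb, map_smul]
  simp
end

section
/- Let L = 𝒜 ⊕ k·x be a Lie-like algebra^{2-nd} over an algebraically closed field k of characteristic 0, where 𝒜 is an ideal of L and ⟨L, L⟩_s ⊆ 𝒜 for all s ∈ S. Let (V, {f_k}, {g_k}) be a finite-dimensional ordinary L-module, u_0 ∈ V, and suppose f_k(A)(u_0) = φ_k(A) u_0 and g_k(A)(u_0) = ψ_k(A) u_0 for all A ∈ 𝒜 and k ∈ S, where φ_k, ψ_k : 𝒜 → k are functionals. Fix h ∈ S and set u_m := g_h(x)^m(u_0). Then for all m ≥ 0, A ∈ 𝒜 and k ∈ S: f_k(A)(u_m) ≡ φ_k(A) u_m and g_k(A)(u_m) ≡ ψ_k(A) u_m modulo the subspace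 V^{ann,+} + span{u_0, …, u_{m−1}}, and f_k(x)(u_m) ≡ u_{m+1} modulo V^{ann,+} + span{u_0, …, u_m}. -/
/-- Proposition 2.2: congruences for u_m = g_h(x)^m(u_0) modulo the plus
    annihilator plus the span of the earlier u_i's. -/
theorem stmt_6 {K : Type*} [Field K] [IsAlgClosed K] [CharZero K]
    {S : Type*} [Nonempty S]
    {L : Type*} [AddCommGroup L] [Module K L]
    {V : Type*} [AddCommGroup V] [Module K V] [FiniteDimensional K V]
    (br : S → L →ₗ[K] L →ₗ[K] L)
    (hjac : ∀ (s h : S) (x y z : L),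
      br h (br s x y) z = br s x (br h y z) + br s (br h x z) y)
    (hsw : ∀ (s h : S) (x y z : L), br h (br s x y) z = br s (br h x y) z)
    (A : Submodule K L) (x : L) (hx : x ∉ A)
    (hcompl : IsCompl A (Submodule.span K {x}))
    (hideal : ∀ (s : S), ∀ a ∈ A, ∀ z : L, br s a z ∈ A ∧ br s z a ∈ A)
    (hLL : ∀ (s : S) (a b : L), br s a b ∈ A)
    (f g : S → L →ₗ[K] Module.End K V)
    (hf : ∀ (h k : S) (x y : L), f h (br k x y) = f h x * f k y - f k y * f h x)
    (hg : ∀ (h k : S) (x y : L), g h (br k x y) = g h x * f k y - f k y * g h x)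
    (hgg : ∀ (h k : S) (x y : L),
      g k x * g h y = g h x * f k y ∧ g h x * f k y = g k x * f h y)
    (hff : ∀ (h k : S) (x y : L), f k x * f h y = f h x * f k y)
    (hfg : ∀ (h k : S) (x y : L), f k x * g h y = f h x * g k y)
    (u0 : V) (φ ψ : S → A → K)
    (hfu0 : ∀ (k : S) (a : A), f k a.1 u0 = φ k a • u0)
    (hgu0 : ∀ (k : S) (a : A), g k a.1 u0 = ψ k a • u0)
    (h : S) :
    ∀ (m : ℕ) (a : A) (k : S),
      (f k a.1 (((g h x) ^ m) u0) - φ k a • ((g h x) ^ m) u0 ∈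
        Submodule.span K
          {w : V | ∃ (s t : S) (y : L) (v : V), w = (g s y - f t y) v} ⊔
        Submodule.span K (Set.range fun i : Fin m => ((g h x) ^ (i : ℕ)) u0)) ∧
      (g k a.1 (((g h x) ^ m) u0) - ψ k a • ((g h x) ^ m) u0 ∈
        Submodule.span K
          {w : V | ∃ (s t : S) (y : L) (v : V), w = (g s y - f t y) v} ⊔
        Submodule.span K (Set.range fun i : Fin m => ((g h x) ^ (i : ℕ)) u0)) ∧
      (f k x (((g h x) ^ m) u0) - ((g h x) ^ (m + 1)) u0 ∈
        Submodule.span K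
          {w : V | ∃ (s t : S) (y : L) (v : V), w = (g s y - f t y) v} ⊔
        Submodule.span K
          (Set.range fun i : Fin (m + 1) => ((g h x) ^ (i : ℕ)) u0)) := by
  classical
  set Wset : Set V := {w : V | ∃ (s t : S) (y : L) (v : V), w = (g s y - f t y) v}
    with hWset
  set W : Submodule K V := Submodule.span K Wset with hW
  -- generators of W
  have hWgen : ∀ (s t : S) (y : L) (v : V), g s y v - f t y v ∈ W := by
    intro s t y v
    exact Submodule.subset_span ⟨s, t, y, v, (LinearMap.sub_apply _ _ _).symm⟩
  -- W is invariant under all f k' y'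
  have hWf : ∀ (k' : S) (y' : L), ∀ w ∈ W, f k' y' w ∈ W := by
    intro k' y' w hw
    refine Submodule.span_induction ?_ ?_ ?_ ?_ hw
    · rintro _ ⟨s, t, y, v, rfl⟩
      have e1 := DFunLike.congr_fun (hg s k' y y') v
      have e2 := DFunLike.congr_fun (hf t k' y y') v
      simp only [Module.End.mul_apply, LinearMap.sub_apply] at e1 e2
      have key : f k' y' ((g s y - f t y) v) =
          (g s y (f k' y' v) - f t y (f k' y' v)) -
          (g s (br k' y y') v - f t (br k' y y') v) := by
        simp only [LinearMap.sub_apply, map_sub]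
        rw [e1, e2]; abel
      rw [key]
      exact sub_mem (hWgen _ _ _ _) (hWgen _ _ _ _)
    · simp
    · intro a b _ _ ha hb; rw [map_add]; exact add_mem ha hb
    · intro c a _ ha; rw [map_smul]; exact Submodule.smul_mem _ _ ha
  -- W is invariant under all g k' y'
  have hWg : ∀ (k' : S) (y' : L), ∀ w ∈ W, g k' y' w ∈ W := by
    intro k' y' w hw
    refine Submodule.span_induction ?_ ?_ ?_ ?_ hw
    · rintro _ ⟨s, t, y, v, rfl⟩
      have e1 := DFunLike.congr_fun (hgg s k' y' y).1 v
      have e2 := DFunLike.congr_fun (hgg k' t y' y).2 v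
      simp only [Module.End.mul_apply] at e1 e2
      have key : g k' y' ((g s y - f t y) v) =
          (g s y' (f k' y v) - f k' y' (f k' y v)) -
          (g t y' (f k' y v) - f k' y' (f k' y v)) := by
        simp only [LinearMap.sub_apply, map_sub]
        rw [e1, e2]; abel
      rw [key]
      exact sub_mem (hWgen _ _ _ _) (hWgen _ _ _ _)
    · simp
    · intro a b _ _ ha hb; rw [map_add]; exact add_mem ha hb
    · intro c a _ ha; rw [map_smul]; exact Submodule.smul_mem _ _ ha
  -- W is invariant under powers of g h x
  have hWpow : ∀ (n : ℕ), ∀ w ∈ W, ((g h x) ^ n) w ∈ W := by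
    intro n
    induction n with
    | zero => intro w hw; simpa using hw
    | succ n ih =>
      intro w hw
      rw [pow_succ, Module.End.mul_apply]
      exact ih _ (hWg h x w hw)
  -- notation for the finite spans
  have hTmono : ∀ m : ℕ,
      Submodule.span K (Set.range fun i : Fin m => ((g h x) ^ (i : ℕ)) u0) ≤
      Submodule.span K (Set.range fun i : Fin (m+1) => ((g h x) ^ (i : ℕ)) u0) := by
    intro m
    apply Submodule.span_mono
    rintro _ ⟨i, rfl⟩
    exact ⟨i.castSucc, rfl⟩
  have huT : ∀ (m i : ℕ) (hi : i < m),
      ((g h x) ^ i) u0 ∈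
        Submodule.span K (Set.range fun i : Fin m => ((g h x) ^ (i : ℕ)) u0) :=
    fun m i hi => Submodule.subset_span ⟨⟨i, hi⟩, rfl⟩
  -- g h x maps W ⊔ T m into W ⊔ T (m+1)
  have hGU : ∀ m : ℕ, ∀ w ∈ W ⊔
      Submodule.span K (Set.range fun i : Fin m => ((g h x) ^ (i : ℕ)) u0),
      g h x w ∈ W ⊔
      Submodule.span K (Set.range fun i : Fin (m+1) => ((g h x) ^ (i : ℕ)) u0) := by
    intro m w hw
    rw [Submodule.mem_sup] at hw ⊢
    obtain ⟨w1, h1, w2, h2, rfl⟩ := hw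
    refine ⟨g h x w1, hWg h x w1 h1, g h x w2, ?_, (map_add _ _ _).symm⟩
    refine Submodule.span_induction ?_ ?_ ?_ ?_ h2
    · rintro _ ⟨i, rfl⟩
      have : g h x (((g h x) ^ (i : ℕ)) u0) = ((g h x) ^ ((i : ℕ) + 1)) u0 := by
        rw [pow_succ']; rfl
      rw [this]
      exact huT (m+1) ((i : ℕ)+1) (by omega)
    · simp
    · intro a b _ _ ha hb; rw [map_add]; exact add_mem ha hb
    · intro c a _ ha; rw [map_smul]; exact Submodule.smul_mem _ _ ha
  -- the first congruence, by induction on m; the second is derived from it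
  have keyG_of : ∀ m : ℕ,
      (∀ (a : A) (k : S), f k a.1 (((g h x) ^ m) u0) - φ k a • ((g h x) ^ m) u0 ∈
        W ⊔ Submodule.span K (Set.range fun i : Fin m => ((g h x) ^ (i : ℕ)) u0)) →
      ∀ (a : A) (k : S), g k a.1 (((g h x) ^ m) u0) - ψ k a • ((g h x) ^ m) u0 ∈
        W ⊔ Submodule.span K (Set.range fun i : Fin m => ((g h x) ^ (i : ℕ)) u0) := by
    intro m hF a k
    have h1 : g k a.1 (((g h x) ^ m) u0) - f k a.1 (((g h x) ^ m) u0) ∈ W :=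
      hWgen k k a.1 _
    have h3 : φ k a • ((g h x) ^ m) u0 - ψ k a • ((g h x) ^ m) u0 ∈ W := by
      have e : φ k a • ((g h x) ^ m) u0 - ψ k a • ((g h x) ^ m) u0 =
          ((g h x) ^ m) (φ k a • u0 - ψ k a • u0) := by
        rw [map_sub, map_smul, map_smul]
      rw [e]
      refine hWpow m _ ?_
      rw [← hfu0 k a, ← hgu0 k a]
      have := hWgen k k a.1 u0
      simpa using neg_mem this
    have hsplit : g k a.1 (((g h x) ^ m) u0) - ψ k a • ((g h x) ^ m) u0 =
        (g k a.1 (((g h x) ^ m) u0) - f k a.1 (((g h x) ^ m) u0)) +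
        (f k a.1 (((g h x) ^ m) u0) - φ k a • ((g h x) ^ m) u0) +
        (φ k a • ((g h x) ^ m) u0 - ψ k a • ((g h x) ^ m) u0) := by abel
    rw [hsplit]
    exact add_mem (add_mem (Submodule.mem_sup_left h1) (hF a k))
      (Submodule.mem_sup_left h3)
  have keyF : ∀ (m : ℕ) (a : A) (k : S),
      f k a.1 (((g h x) ^ m) u0) - φ k a • ((g h x) ^ m) u0 ∈
        W ⊔ Submodule.span K (Set.range fun i : Fin m => ((g h x) ^ (i : ℕ)) u0) := by
    intro m
    induction m with
    | zero =>
      intro a k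
      simp only [pow_zero, Module.End.one_apply]
      rw [hfu0 k a, sub_self]
      exact zero_mem _
    | succ m ih =>
      intro a k
      have keyG := keyG_of m ih
      -- commute f k a past g h x
      have hcomm := DFunLike.congr_fun (hg h k x a.1) (((g h x) ^ m) u0)
      simp only [Module.End.mul_apply, LinearMap.sub_apply] at hcomm
      -- hcomm : g h (br k x a.1) u_m = g h x (f k a.1 u_m) - f k a.1 (g h x u_m)
      have hpow : ((g h x) ^ (m+1)) u0 = g h x (((g h x) ^ m) u0) := by
        rw [pow_succ']; rfl
      set a' : A := ⟨br k x a.1, (hideal k a.1 a.2 x).2⟩ with ha'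
      have hG' := keyG a' h
      -- f k a.1 u_{m+1} = g h x (f k a.1 u_m) - g h a'.1 u_m
      have e1 : f k a.1 (((g h x) ^ (m+1)) u0) =
          g h x (f k a.1 (((g h x) ^ m) u0)) - g h a'.1 (((g h x) ^ m) u0) := by
        rw [hpow]
        have : g h a'.1 (((g h x) ^ m) u0) = g h (br k x a.1) (((g h x) ^ m) u0) := rfl
        rw [this, hcomm]; abel
      have hsplit : f k a.1 (((g h x) ^ (m+1)) u0) - φ k a • ((g h x) ^ (m+1)) u0 =
          g h x (f k a.1 (((g h x) ^ m) u0) - φ k a • ((g h x) ^ m) u0) -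
          (g h a'.1 (((g h x) ^ m) u0) - ψ h a' • ((g h x) ^ m) u0) -
          ψ h a' • ((g h x) ^ m) u0 := by
        rw [e1, map_sub, map_smul, hpow]; abel
      rw [hsplit]
      refine sub_mem (sub_mem ?_ ?_) ?_
      · exact hGU m _ (ih a k)
      · exact le_trans (sup_le_sup_left (hTmono m) W) (le_refl _) hG'
      · exact Submodule.mem_sup_right (Submodule.smul_mem _ _ (huT (m+1) m (by omega)))
  intro m a k
  refine ⟨keyF m a k, keyG_of m (keyF m) a k, ?_⟩
  have hpow : ((g h x) ^ (m+1)) u0 = g h x (((g h x) ^ m) u0) := by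
    rw [pow_succ']; rfl
  have : f k x (((g h x) ^ m) u0) - ((g h x) ^ (m+1)) u0 =
      -(g h x (((g h x) ^ m) u0) - f k x (((g h x) ^ m) u0)) := by
    rw [hpow]; abel
  rw [this]
  exact Submodule.mem_sup_left (neg_mem (hWgen h k x _))
end

section
/- With notation as in Proposition 2.2 (L = 𝒜 ⊕ k·x with 𝒜 an ideal containing all ⟨L,L⟩_s, V a finite-dimensional ordinary L-module over an algebraically closed field of characteristic 0, φ_k, ψ_k : 𝒜 → k functionals, U_φ := ∩_k { u : f_k(A)u = φ_k(A)u for all A ∈ 𝒜 }, U_ψ := ∩_k { u : g_k(A)u = ψ_k(A)u for all A ∈ 𝒜 }): the subspace U_φ ∩ U_ψ is invariant under f_h(x) for all h ∈ S. -/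
open Submodule Module

/-- The classical invariance lemma, operator form: if `T` is a set of endomorphisms of a
finite-dimensional space over a char-zero field, closed under commutator with a fixed
endomorphism `F`, and every element of `T` acts on a vector `u` by a scalar, then every
commutator `[P, F]` with `P ∈ T` kills `u`. -/
theorem aux_invariance {K V : Type*} [Field K] [CharZero K] [AddCommGroup V] [Module K V]
    [FiniteDimensional K V] (F : Module.End K V) (T : Set (Module.End K V))
    (hT : ∀ P ∈ T, P * F - F * P ∈ T) (u : V)
    (hu : ∀ P ∈ T, ∃ c : K, P u = c • u) :
    ∀ P ∈ T, (P * F - F * P) u = 0 := by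
  classical
  rcases eq_or_ne u 0 with rfl | hu0
  · intro P hP; exact map_zero _
  choose χ hχ using hu
  set w : ℕ → V := fun n => (F ^ n) u with hw
  have hw0 : w 0 = u := by simp [hw]
  have hwsucc : ∀ n, w (n + 1) = F (w n) := by
    intro n
    simp [hw, pow_succ', Module.End.mul_apply]
  have hmono : ∀ {m n : ℕ}, m ≤ n →
      span K (w '' Set.Iio m) ≤ span K (w '' Set.Iio n) :=
    fun hmn => span_mono (Set.image_mono (Set.Iio_subset_Iio hmn))
  -- key triangularity claim
  have key : ∀ n, ∀ P, ∀ hP : P ∈ T,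
      P (w n) - χ P hP • w n ∈ span K (w '' Set.Iio n) := by
    intro n
    induction n with
    | zero =>
      intro P hP
      rw [hw0, hχ P hP, sub_self]
      exact zero_mem _
    | succ n ih =>
      intro P hP
      have hQ : P * F - F * P ∈ T := hT P hP
      have hFmap : ∀ z ∈ span K (w '' Set.Iio n), F z ∈ span K (w '' Set.Iio (n + 1)) := by
        intro z hz
        have hle : Submodule.map F (span K (w '' Set.Iio n)) ≤ span K (w '' Set.Iio (n + 1)) := by
          rw [Submodule.map_span, span_le]
          rintro _ ⟨_, ⟨m, hm, rfl⟩, rfl⟩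
          exact subset_span ⟨m + 1, Nat.succ_lt_succ hm, hwsucc m⟩
        exact hle ⟨z, hz, rfl⟩
      have heq : P (w (n + 1)) - χ P hP • w (n + 1) =
          F (P (w n) - χ P hP • w n)
            + ((P * F - F * P) (w n) - χ _ hQ • w n) + χ _ hQ • w n := by
        simp only [hwsucc n, map_sub, map_smul, LinearMap.sub_apply, Module.End.mul_apply]
        abel
      rw [heq]
      refine add_mem (add_mem (hFmap _ (ih P hP)) (hmono (Nat.le_succ n) (ih _ hQ))) ?_
      exact smul_mem _ _ (subset_span ⟨n, Nat.lt_succ_self n, rfl⟩)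
  -- the sequence of spans must stabilize
  have hex : ∃ n, w n ∈ span K (w '' Set.Iio n) := by
    by_contra hcon
    push_neg at hcon
    have hsm : StrictMono fun n => finrank K (span K (w '' Set.Iio n)) := by
      apply strictMono_nat_of_lt_succ
      intro n
      refine Submodule.finrank_lt_finrank_of_lt (lt_of_le_of_ne (hmono (Nat.le_succ n)) ?_)
      intro hEq
      exact hcon n (by rw [hEq]; exact subset_span ⟨n, Nat.lt_succ_self n, rfl⟩)
    have h1 := hsm.le_apply (x := finrank K V + 1)
    have h2 : finrank K (span K (w '' Set.Iio (finrank K V + 1))) ≤ finrank K V :=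
      Submodule.finrank_le _
    omega
  set N := Nat.find hex with hNdef
  have hN : w N ∈ span K (w '' Set.Iio N) := Nat.find_spec hex
  have hNmin : ∀ m, m < N → w m ∉ span K (w '' Set.Iio m) := fun m hm => Nat.find_min hex hm
  have hNpos : 0 < N := by
    rcases Nat.eq_zero_or_pos N with h0 | h
    · exfalso
      apply hu0
      have h1 : w 0 ∈ span K (w '' Set.Iio 0) := h0 ▸ hN
      have h2 : Set.Iio (0 : ℕ) = (∅ : Set ℕ) := by ext m; simp
      rw [h2, Set.image_empty, span_empty, mem_bot, hw0] at h1
      exact h1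
    · exact h
  have hrange : ∀ n : ℕ, Set.range (fun i : Fin n => w i) = w '' Set.Iio n := by
    intro n; ext z
    constructor
    · rintro ⟨i, rfl⟩; exact ⟨i, i.2, rfl⟩
    · rintro ⟨m, hm, rfl⟩; exact ⟨⟨m, hm⟩, rfl⟩
  have hli : ∀ n, n ≤ N → LinearIndependent K (fun i : Fin n => w i) := by
    intro n
    induction n with
    | zero => intro _; exact linearIndependent_empty_type
    | succ n ih =>
      intro hn
      have h1 : (fun i : Fin (n + 1) => w i) = Fin.snoc (fun i : Fin n => w i) (w n) := by
        funext i
        refine Fin.lastCases ?_ (fun j => ?_) i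
        · simp
        · simp
      rw [h1, linearIndependent_fin_snoc]
      refine ⟨ih (Nat.le_of_succ_le hn), ?_⟩
      rw [hrange]
      exact hNmin n hn
  have hliN : LinearIndependent K (fun i : Fin N => w i) := hli N le_rfl
  set W : Submodule K V := span K (Set.range fun i : Fin N => w i) with hWdef
  have hWeq : W = span K (w '' Set.Iio N) := by rw [hWdef, hrange]
  have hFW : ∀ z ∈ W, F z ∈ W := by
    intro z hz
    rw [hWeq] at hz ⊢
    have hmap : Submodule.map F (span K (w '' Set.Iio N)) ≤ span K (w '' Set.Iio N) := by
      rw [Submodule.map_span, span_le]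
      rintro _ ⟨_, ⟨m, hm, rfl⟩, rfl⟩
      rw [← hwsucc m]
      have hmlt : m < N := hm
      rcases Nat.lt_or_ge (m + 1) N with hlt | hge
      · exact subset_span ⟨m + 1, hlt, rfl⟩
      · have : m + 1 = N := by omega
        rw [this]; exact hN
    exact hmap ⟨z, hz, rfl⟩
  have hPW : ∀ P, P ∈ T → ∀ z ∈ W, P z ∈ W := by
    intro P hP z hz
    rw [hWeq] at hz ⊢
    have hmap : Submodule.map P (span K (w '' Set.Iio N)) ≤ span K (w '' Set.Iio N) := by
      rw [Submodule.map_span, span_le]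
      rintro _ ⟨_, ⟨m, hm, rfl⟩, rfl⟩
      have hmlt : m < N := hm
      have hdec : P (w m) = (P (w m) - χ P hP • w m) + χ P hP • w m := by abel
      rw [hdec]
      exact add_mem (hmono hmlt.le (key m P hP)) (smul_mem _ _ (subset_span ⟨m, hm, rfl⟩))
    exact hmap ⟨z, hz, rfl⟩
  let b : Basis (Fin N) K W := Basis.span hliN
  have hb : ∀ i : Fin N, (b i : V) = w i := fun i => congrArg Subtype.val (Basis.span_apply hliN i)
  have hcoord : ∀ (i : Fin N) (z : V), z ∈ span K (w '' Set.Iio i.1) →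
      ∀ hzW : z ∈ W, b.repr ⟨z, hzW⟩ i = 0 := by
    intro i z hz
    induction hz using Submodule.span_induction with
    | mem y hy =>
      rintro hyW
      obtain ⟨m, hm, rfl⟩ := hy
      have hmi : m < i.1 := hm
      have hmN : m < N := lt_trans hmi i.2
      have hbj : (⟨w m, hyW⟩ : W) = b ⟨m, hmN⟩ := by
        apply Subtype.ext
        rw [hb ⟨m, hmN⟩]
      rw [hbj, Basis.repr_self, Finsupp.single_apply]
      have hne : (⟨m, hmN⟩ : Fin N) ≠ i := by
        intro hEq
        have : m = i.1 := congrArg Fin.val hEq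
        omega
      simp [hne]
    | zero =>
      intro h0W
      have : (⟨(0 : V), h0W⟩ : W) = 0 := rfl
      rw [this, map_zero]; rfl
    | add y z hy hz ihy ihz =>
      intro hyzW
      have hyW : y ∈ W := hWeq ▸ hmono (le_of_lt i.2) hy
      have hzW' : z ∈ W := hWeq ▸ hmono (le_of_lt i.2) hz
      have : (⟨y + z, hyzW⟩ : W) = ⟨y, hyW⟩ + ⟨z, hzW'⟩ := rfl
      rw [this, map_add]
      simp [ihy hyW, ihz hzW']
    | smul c y hy ihy =>
      intro hcyW
      have hyW : y ∈ W := hWeq ▸ hmono (le_of_lt i.2) hy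
      have : (⟨c • y, hcyW⟩ : W) = c • (⟨y, hyW⟩ : W) := rfl
      rw [this, map_smul]
      simp [ihy hyW]
  have hleW : ∀ i : Fin N, span K (w '' Set.Iio i.1) ≤ W :=
    fun i => hWeq ▸ hmono (le_of_lt i.2)
  -- trace of each P ∈ T on W equals N • χ P
  have htr : ∀ P, ∀ hP : P ∈ T,
      LinearMap.trace K W (P.restrict (hPW P hP)) = (N : K) * χ P hP := by
    intro P hP
    rw [LinearMap.trace_eq_matrix_trace K b]
    have hdiag : ∀ i : Fin N, (LinearMap.toMatrix b b (P.restrict (hPW P hP))) i i = χ P hP := by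
      intro i
      rw [LinearMap.toMatrix_apply]
      have hmem : P (w i.1) - χ P hP • w i.1 ∈ W := hleW i (key i.1 P hP)
      have hrw : P.restrict (hPW P hP) (b i) =
          χ P hP • b i + ⟨P (w i.1) - χ P hP • w i.1, hmem⟩ := by
        apply Subtype.ext
        push_cast
        rw [LinearMap.restrict_coe_apply, hb i]
        abel
      rw [hrw, map_add, map_smul, Basis.repr_self]
      have h0 : b.repr ⟨P (w i.1) - χ P hP • w i.1, hmem⟩ i = 0 :=
        hcoord i _ (key i.1 P hP) hmem
      simp [h0]
    have hsum : Matrix.trace (LinearMap.toMatrix b b (P.restrict (hPW P hP)))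
        = ∑ _i : Fin N, χ P hP := by
      rw [Matrix.trace]
      exact Finset.sum_congr rfl fun i _ => by rw [Matrix.diag_apply, hdiag i]
    rw [hsum, Finset.sum_const, Finset.card_univ, Fintype.card_fin, nsmul_eq_mul]
  -- conclude
  intro P hP
  have hQ : P * F - F * P ∈ T := hT P hP
  have hres : (P * F - F * P).restrict (hPW _ hQ) =
      P.restrict (hPW P hP) * F.restrict hFW - F.restrict hFW * P.restrict (hPW P hP) := by
    apply LinearMap.ext
    intro z
    apply Subtype.ext
    simp [LinearMap.restrict_coe_apply, Module.End.mul_apply, LinearMap.restrict_apply]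
  have h0 : LinearMap.trace K W ((P * F - F * P).restrict (hPW _ hQ)) = 0 := by
    rw [hres, map_sub, LinearMap.trace_mul_comm, sub_self]
  rw [htr _ hQ] at h0
  have hN0 : (N : K) ≠ 0 := Nat.cast_ne_zero.mpr hNpos.ne'
  have hχ0 : χ _ hQ = 0 := by
    rcases mul_eq_zero.mp h0 with h | h
    · exact absurd h hN0
    · exact h
  rw [hχ _ hQ, hχ0, zero_smul]

/-- Proposition 2.3 (2.21): U_φ ∩ U_ψ is invariant under f_h(x). -/
theorem stmt_7 {K : Type*} [Field K] [IsAlgClosed K] [CharZero K]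
    {S : Type*} [Nonempty S]
    {L : Type*} [AddCommGroup L] [Module K L]
    {V : Type*} [AddCommGroup V] [Module K V] [FiniteDimensional K V]
    (br : S → L →ₗ[K] L →ₗ[K] L)
    (hjac : ∀ (s h : S) (x y z : L),
      br h (br s x y) z = br s x (br h y z) + br s (br h x z) y)
    (hsw : ∀ (s h : S) (x y z : L), br h (br s x y) z = br s (br h x y) z)
    (A : Submodule K L) (x : L) (hx : x ∉ A)
    (hcompl : IsCompl A (Submodule.span K {x}))
    (hideal : ∀ (s : S), ∀ a ∈ A, ∀ z : L, br s a z ∈ A ∧ br s z a ∈ A)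
    (hLL : ∀ (s : S) (a b : L), br s a b ∈ A)
    (f g : S → L →ₗ[K] Module.End K V)
    (hf : ∀ (h k : S) (x y : L), f h (br k x y) = f h x * f k y - f k y * f h x)
    (hg : ∀ (h k : S) (x y : L), g h (br k x y) = g h x * f k y - f k y * g h x)
    (hgg : ∀ (h k : S) (x y : L),
      g k x * g h y = g h x * f k y ∧ g h x * f k y = g k x * f h y)
    (hff : ∀ (h k : S) (x y : L), f k x * f h y = f h x * f k y)
    (hfg : ∀ (h k : S) (x y : L), f k x * g h y = f h x * g k y)
    (φ ψ : S → A → K) :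
    ∀ (h : S) (u : V),
      (∀ (k : S) (a : A), f k a.1 u = φ k a • u) →
      (∀ (k : S) (a : A), g k a.1 u = ψ k a • u) →
      (∀ (k : S) (a : A), f k a.1 (f h x u) = φ k a • f h x u) ∧
      (∀ (k : S) (a : A), g k a.1 (f h x u) = ψ k a • f h x u) := by
  intro h u hφ hψ
  classical
  set T : Set (Module.End K V) :=
    {P | (∃ k : S, ∃ a : A, P = f k a.1) ∨ (∃ k : S, ∃ a : A, P = g k a.1)} with hTdef
  have hT : ∀ P ∈ T, P * (f h x) - (f h x) * P ∈ T := by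
    rintro P (⟨k, a, rfl⟩ | ⟨k, a, rfl⟩)
    · exact Or.inl ⟨k, ⟨br h a.1 x, (hideal h a.1 a.2 x).1⟩, (hf k h a.1 x).symm⟩
    · exact Or.inr ⟨k, ⟨br h a.1 x, (hideal h a.1 a.2 x).1⟩, (hg k h a.1 x).symm⟩
  have hev : ∀ P ∈ T, ∃ c : K, P u = c • u := by
    rintro P (⟨k, a, rfl⟩ | ⟨k, a, rfl⟩)
    · exact ⟨φ k a, hφ k a⟩
    · exact ⟨ψ k a, hψ k a⟩
  have main := aux_invariance (f h x) T hT u hev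
  constructor
  · intro k a
    have h1 := main (f k a.1) (Or.inl ⟨k, a, rfl⟩)
    simp only [LinearMap.sub_apply, Module.End.mul_apply, sub_eq_zero] at h1
    rw [h1, hφ k a, map_smul]
  · intro k a
    have h1 := main (g k a.1) (Or.inr ⟨k, a, rfl⟩)
    simp only [LinearMap.sub_apply, Module.End.mul_apply, sub_eq_zero] at h1
    rw [h1, hψ k a, map_smul]
end

section
/- With L = 𝒜 ⊕ k·x a finite-dimensional Lie-like algebra^{2-nd} over an algebraically closed field of characteristic 0, 𝒜 an ideal with ⟨L,L⟩_s ⊆ 𝒜, and V a finite-dimensional ordinary L-module: if u ∈ U_φ ∩ U_ψ (a common eigenvector for all f_k(𝒜) with functionals φ_k and for all g_k(𝒜) with functionals ψ_k) and u ∉ V^{ann,+}, then ψ_h(⟨x, A⟩_k) = 0 for all A ∈ 𝒜 and h, k ∈ S. -/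
/-- The trace argument (2.32): for u ∈ (U_φ ∩ U_ψ) \ V^{ann,+},
    ψ_h(⟨x, A⟩_k) = 0 for all A ∈ 𝒜 and h, k ∈ S. -/
theorem stmt_8 {K : Type*} [Field K] [IsAlgClosed K] [CharZero K]
    {S : Type*} [Nonempty S]
    {L : Type*} [AddCommGroup L] [Module K L]
    {V : Type*} [AddCommGroup V] [Module K V] [FiniteDimensional K V]
    (br : S → L →ₗ[K] L →ₗ[K] L)
    (hjac : ∀ (s h : S) (x y z : L),
      br h (br s x y) z = br s x (br h y z) + br s (br h x z) y)
    (hsw : ∀ (s h : S) (x y z : L), br h (br s x y) z = br s (br h x y) z)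
    (A : Submodule K L) (x : L) (hx : x ∉ A)
    (hcompl : IsCompl A (Submodule.span K {x}))
    (hideal : ∀ (s : S), ∀ a ∈ A, ∀ z : L, br s a z ∈ A ∧ br s z a ∈ A)
    (hLL : ∀ (s : S) (a b : L), br s a b ∈ A)
    (f g : S → L →ₗ[K] Module.End K V)
    (hf : ∀ (h k : S) (x y : L), f h (br k x y) = f h x * f k y - f k y * f h x)
    (hg : ∀ (h k : S) (x y : L), g h (br k x y) = g h x * f k y - f k y * g h x)
    (hgg : ∀ (h k : S) (x y : L),
      g k x * g h y = g h x * f k y ∧ g h x * f k y = g k x * f h y)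
    (hff : ∀ (h k : S) (x y : L), f k x * f h y = f h x * f k y)
    (hfg : ∀ (h k : S) (x y : L), f k x * g h y = f h x * g k y)
    [FiniteDimensional K L]
    (φ ψ : S → A → K) (u : V)
    (hfu : ∀ (k : S) (a : A), f k a.1 u = φ k a • u)
    (hgu : ∀ (k : S) (a : A), g k a.1 u = ψ k a • u)
    (hann : u ∉ Submodule.span K
      {w : V | ∃ (s t : S) (y : L) (v : V), w = (g s y - f t y) v}) :
    ∀ (h k : S) (a : A), ψ h ⟨br k x a.1, hLL k x a.1⟩ = 0 := by
  classical
  intro h k a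
  set Sp : Submodule K V := Submodule.span K
    {w : V | ∃ (s t : S) (y : L) (v : V), w = (g s y - f t y) v} with hSpdef
  -- ψ s b = φ t b for all s t b
  have hψφ : ∀ (s t : S) (b : A), ψ s b = φ t b := by
    intro s t b
    by_contra hne
    apply hann
    have hw : (g s b.1 - f t b.1) u ∈ Sp :=
      Submodule.subset_span ⟨s, t, b.1, u, rfl⟩
    have hw2 : (g s b.1 - f t b.1) u = (ψ s b - φ t b) • u := by
      rw [LinearMap.sub_apply, hgu s b, hfu t b, sub_smul]
    have : u = (ψ s b - φ t b)⁻¹ • ((g s b.1 - f t b.1) u) := by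
      rw [hw2, smul_smul, inv_mul_cancel₀ (sub_ne_zero.mpr hne), one_smul]
    rw [this]
    exact Sp.smul_mem _ hw
  have hu0 : u ≠ 0 := by
    intro h0
    exact hann (h0 ▸ Sp.zero_mem)
  -- the common eigenvalue functional
  set χ : A → K := fun b => φ h b with hχdef
  have hχ : ∀ (s : S) (b : A), φ s b = χ b := by
    intro s b
    rw [← hψφ h s b, hψφ h h b]
  set X : Module.End K V := f h x with hXdef
  set Wseq : ℕ → Submodule K V :=
    fun i => Submodule.span K ((fun j : ℕ => (X ^ j) u) '' {j | j < i}) with hWdef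
  have mono : Monotone Wseq := fun i j hij =>
    Submodule.span_mono (Set.image_mono fun m hm => lt_of_lt_of_le hm hij)
  have gen_mem : ∀ {i j : ℕ}, j < i → (X ^ j) u ∈ Wseq i :=
    fun {i j} hji => Submodule.subset_span ⟨j, hji, rfl⟩
  have hW0 : Wseq 0 = ⊥ := by
    have he : {j : ℕ | j < 0} = (∅ : Set ℕ) := by ext j; simp
    simp [hWdef, he]
  have hXmap : ∀ i, ∀ v ∈ Wseq i, X v ∈ Wseq (i + 1) := by
    intro i v hv
    induction hv using Submodule.span_induction with
    | mem w hw =>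
      obtain ⟨j, hj, rfl⟩ := hw
      have : X ((X ^ j) u) = (X ^ (j + 1)) u := by
        rw [pow_succ', Module.End.mul_apply]
      rw [this]
      exact gen_mem (Nat.succ_lt_succ hj)
    | zero => simpa using (Wseq (i + 1)).zero_mem
    | add y z _ _ hy hz => rw [map_add]; exact add_mem hy hz
    | smul c y _ hy => rw [map_smul]; exact Submodule.smul_mem _ _ hy
  -- the key induction: f s b acts as χ b modulo lower filtration
  have key : ∀ (i : ℕ) (s : S) (b : A),
      f s b.1 ((X ^ i) u) - χ b • (X ^ i) u ∈ Wseq i := by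
    intro i
    induction i with
    | zero =>
      intro s b
      have : f s b.1 ((X ^ 0) u) - χ b • (X ^ 0) u = 0 := by
        simp only [pow_zero, Module.End.one_apply]
        rw [hfu s b, hχ s b, sub_self]
      rw [this]
      exact (Wseq 0).zero_mem
    | succ i ih =>
      intro s b
      have hb' : br h b.1 x ∈ A := (hideal h b.1 b.2 x).1
      set b' : A := ⟨br h b.1 x, hb'⟩ with hb'def
      have e0 : (X ^ (i + 1)) u = X ((X ^ i) u) := by
        rw [pow_succ', Module.End.mul_apply]
      have e1 : f s b.1 (X ((X ^ i) u))
          = X (f s b.1 ((X ^ i) u)) + f s b'.1 ((X ^ i) u) := by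
        have hcomm : f s b.1 * X = X * f s b.1 + f s b'.1 := by
          have := hf s h b.1 x
          rw [hb'def]
          simp only [← hXdef] at this ⊢
          rw [this]; abel
        calc f s b.1 (X ((X ^ i) u)) = (f s b.1 * X) ((X ^ i) u) := rfl
          _ = (X * f s b.1 + f s b'.1) ((X ^ i) u) := by rw [hcomm]
          _ = X (f s b.1 ((X ^ i) u)) + f s b'.1 ((X ^ i) u) := rfl
      have hsplit : f s b.1 ((X ^ (i + 1)) u) - χ b • (X ^ (i + 1)) u
          = X (f s b.1 ((X ^ i) u) - χ b • (X ^ i) u)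
            + ((f s b'.1 ((X ^ i) u) - χ b' • (X ^ i) u) + χ b' • (X ^ i) u) := by
        rw [e0, e1, map_sub, map_smul]
        abel
      rw [hsplit]
      exact add_mem (hXmap i _ (ih s b))
        (add_mem (mono i.le_succ (ih s b'))
          (Submodule.smul_mem _ _ (gen_mem (Nat.lt_succ_self i))))
  -- existence of a stabilization point
  have hex : ∃ i, (X ^ i) u ∈ Wseq i := by
    by_contra hno
    push_neg at hno
    have hstrict : StrictMono Wseq := by
      apply strictMono_nat_of_lt_succ
      intro i
      exact lt_of_le_of_ne (mono i.le_succ)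
        (fun he => hno i (he ▸ gen_mem (Nat.lt_succ_self i)))
    have hrank : ∀ i, i ≤ Module.finrank K (Wseq i) := by
      intro i
      induction i with
      | zero => exact Nat.zero_le _
      | succ i ih =>
        have h1 : Module.finrank K (Wseq i) < Module.finrank K (Wseq (i + 1)) :=
          Submodule.finrank_lt_finrank_of_lt (hstrict (Nat.lt_succ_self i))
        show i + 1 ≤ Module.finrank K (Wseq (i + 1))
        omega
    have h1 := hrank (Module.finrank K V + 1)
    have h2 := Submodule.finrank_le (Wseq (Module.finrank K V + 1))
    omega
  obtain ⟨n₀, hn₀⟩ := hex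
  set n : ℕ := n₀ + 1 with hndef
  have hPn : (X ^ n) u ∈ Wseq n := by
    have : X ((X ^ n₀) u) = (X ^ n) u := by rw [pow_succ', Module.End.mul_apply]
    exact this ▸ hXmap n₀ _ hn₀
  set W' : Submodule K V := Wseq n with hW'def
  -- W' is X-invariant
  have hXW : ∀ v ∈ W', X v ∈ W' := by
    intro v hv
    induction hv using Submodule.span_induction with
    | mem w hw =>
      obtain ⟨j, hj, rfl⟩ := hw
      have hXj : X ((X ^ j) u) = (X ^ (j + 1)) u := by
        rw [pow_succ', Module.End.mul_apply]
      rw [hXj]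
      rcases Nat.lt_or_ge (j + 1) n with hlt | hge
      · exact gen_mem hlt
      · have : j + 1 = n := le_antisymm hj hge
        rw [this]; exact hPn
    | zero => simpa using W'.zero_mem
    | add y z _ _ hy hz => rw [map_add]; exact add_mem hy hz
    | smul c y _ hy => rw [map_smul]; exact Submodule.smul_mem _ _ hy
  -- W' is invariant under all f s b, b ∈ A
  have hFW : ∀ (s : S) (b : A), ∀ v ∈ W', f s b.1 v ∈ W' := by
    intro s b v hv
    induction hv using Submodule.span_induction with
    | mem w hw =>
      obtain ⟨j, hj, rfl⟩ := hw
      have : f s b.1 ((X ^ j) u)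
          = (f s b.1 ((X ^ j) u) - χ b • (X ^ j) u) + χ b • (X ^ j) u := by abel
      rw [this]
      exact add_mem (mono hj.le (key j s b)) (Submodule.smul_mem _ _ (gen_mem hj))
    | zero => simpa using W'.zero_mem
    | add y z _ _ hy hz => rw [map_add]; exact add_mem hy hz
    | smul c y _ hy => rw [map_smul]; exact Submodule.smul_mem _ _ hy
  -- the shifted operator lowers the filtration
  have hNW : ∀ (s : S) (b : A) (i : ℕ), ∀ v ∈ Wseq (i + 1),
      (f s b.1 - χ b • (1 : Module.End K V)) v ∈ Wseq i := by
    intro s b i v hv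
    induction hv using Submodule.span_induction with
    | mem w hw =>
      obtain ⟨j, hj, rfl⟩ := hw
      have : (f s b.1 - χ b • (1 : Module.End K V)) ((X ^ j) u)
          = f s b.1 ((X ^ j) u) - χ b • (X ^ j) u := by
        simp [LinearMap.sub_apply, LinearMap.smul_apply]
      rw [this]
      exact mono (Nat.lt_succ_iff.mp hj) (key j s b)
    | zero => simpa using (Wseq i).zero_mem
    | add y z _ _ hy hz => rw [map_add]; exact add_mem hy hz
    | smul c y _ hy => rw [map_smul]; exact Submodule.smul_mem _ _ hy
  -- nilpotency of the shifted operator on W'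
  have hNil : ∀ (s : S) (b : A), ∀ i : ℕ, ∀ v ∈ Wseq i,
      (((f s b.1 - χ b • (1 : Module.End K V)) ^ i)) v = 0 := by
    intro s b i
    induction i with
    | zero =>
      intro v hv
      rw [hW0] at hv
      simp only [Submodule.mem_bot] at hv
      simp [hv]
    | succ i ih =>
      intro v hv
      rw [pow_succ, Module.End.mul_apply]
      exact ih _ (hNW s b i v hv)
  -- trace of the restriction of f s b to W'
  have htr : ∀ (s : S) (b : A),
      LinearMap.trace K W' ((f s b.1).restrict (hFW s b))
        = (Module.finrank K W' : K) * χ b := by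
    intro s b
    set N : Module.End K V := f s b.1 - χ b • (1 : Module.End K V) with hNdef
    have hNW' : ∀ v ∈ W', N v ∈ W' := by
      intro v hv
      have : N v = f s b.1 v - χ b • v := by
        simp [hNdef, LinearMap.sub_apply, LinearMap.smul_apply]
      rw [this]
      exact sub_mem (hFW s b v hv) (Submodule.smul_mem _ _ hv)
    have hnilr : IsNilpotent (N.restrict hNW') := by
      refine ⟨n, ?_⟩
      rw [Module.End.pow_restrict]
      ext w
      have := hNil s b n w.1 w.2
      simp only [LinearMap.restrict_coe_apply, LinearMap.zero_apply,
        ZeroMemClass.coe_zero]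
      exact this
    have htrN : LinearMap.trace K W' (N.restrict hNW') = 0 :=
      (LinearMap.isNilpotent_trace_of_isNilpotent hnilr).eq_zero
    have hdecomp : (f s b.1).restrict (hFW s b)
        = N.restrict hNW' + χ b • (1 : Module.End K W') := by
      ext w
      simp only [LinearMap.restrict_coe_apply, LinearMap.add_apply,
        LinearMap.smul_apply, Module.End.one_apply, Submodule.coe_add,
        SetLike.val_smul, hNdef, LinearMap.sub_apply]
      abel
    rw [hdecomp, map_add, htrN, zero_add, map_smul, LinearMap.trace_one]
    simp [mul_comm]
  -- finrank W' is positive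
  have huW : u ∈ W' := by
    have : (X ^ 0) u = u := by simp
    exact this ▸ gen_mem (Nat.succ_pos n₀)
  have hfrpos : 0 < Module.finrank K W' := by
    have : Nontrivial W' := ⟨⟨u, huW⟩, 0, by simpa using hu0⟩
    exact Module.finrank_pos
  -- the commutator has trace zero
  set b₀ : A := ⟨br k x a.1, hLL k x a.1⟩ with hb₀def
  have hcomm : f h b₀.1 = X * f k a.1 - f k a.1 * X := hf h k x a.1
  have hres : (f h b₀.1).restrict (hFW h b₀)
      = X.restrict hXW * (f k a.1).restrict (hFW k a)
        - (f k a.1).restrict (hFW k a) * X.restrict hXW := by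
    ext w
    simp only [Module.End.mul_apply, LinearMap.sub_apply, Submodule.coe_sub,
      LinearMap.restrict_coe_apply, hcomm]
  have htr0 : LinearMap.trace K W' ((f h b₀.1).restrict (hFW h b₀)) = 0 := by
    rw [hres, map_sub, LinearMap.trace_mul_comm, sub_self]
  have hχ0 : χ b₀ = 0 := by
    have := htr h b₀
    rw [htr0] at this
    have hne : (Module.finrank K W' : K) ≠ 0 :=
      Nat.cast_ne_zero.mpr hfrpos.ne'
    exact (mul_eq_zero.mp this.symm).resolve_left hne
  calc ψ h b₀ = φ h b₀ := hψφ h h b₀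
    _ = χ b₀ := hχ h b₀
    _ = 0 := hχ0
end

section
/- With L = 𝒜 ⊕ k·x a Lie-like algebra^{2-nd} over an algebraically closed field of characteristic 0, 𝒜 an ideal with ⟨L,L⟩_s ⊆ 𝒜, and V a finite-dimensional ordinary L-module: for every u ∈ (U_φ ∩ U_ψ) \\ V^{ann,+} and every h ∈ S, the vector g_h(x)(u) lies in U_φ, i.e., f_k(A)(g_h(x)(u)) = φ_k(A)·g_h(x)(u) for all A ∈ 𝒜 and k ∈ S. -/
open Module

/-- Invariance lemma (trace argument): if every `T` in a set `𝔖` of commuting-style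
operators has `u` as an eigenvector and `𝔖` is stable under commutator with `B`,
then each commutator `[B,T]` kills `u`. -/
lemma aux_comm_eigen_zero {K V : Type*} [Field K] [CharZero K] [AddCommGroup V]
    [Module K V] [FiniteDimensional K V]
    (B : Module.End K V) (𝔖 : Set (Module.End K V)) (u : V) (hu : u ≠ 0)
    (heig : ∀ T ∈ 𝔖, ∃ c : K, T u = c • u)
    (hcomm : ∀ T ∈ 𝔖, B * T - T * B ∈ 𝔖) :
    ∀ T ∈ 𝔖, (B * T - T * B) u = 0 := by
  set Uf : ℕ → Submodule K V :=
    fun n => Submodule.span K ((fun i => (B ^ i) u) '' Set.Iio n) with hUf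
  have hmono : Monotone Uf := fun m n hmn =>
    Submodule.span_mono (Set.image_mono (fun i hi => lt_of_lt_of_le hi hmn))
  have hgen : ∀ {i n : ℕ}, i < n → (B ^ i) u ∈ Uf n := fun {i n} hin =>
    Submodule.subset_span ⟨i, hin, rfl⟩
  have hUf0 : Uf 0 = ⊥ := by
    have : Set.Iio (0:ℕ) = ∅ := by ext i; simp
    simp [hUf, this]
  have hpow : ∀ i : ℕ, (B ^ (i + 1)) u = B ((B ^ i) u) := by
    intro i; rw [pow_succ']; rfl
  have hBmap : ∀ n, ∀ v ∈ Uf n, B v ∈ Uf (n + 1) := by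
    intro n v hv
    have hm : Submodule.map B (Uf n) ≤ Uf (n + 1) := by
      simp only [hUf, Submodule.map_span, Submodule.span_le]
      rintro _ ⟨_, ⟨i, hi, rfl⟩, rfl⟩
      exact (hpow i) ▸ hgen (by simpa using hi)
    exact hm ⟨v, hv, rfl⟩
  have key : ∀ n, ∀ T ∈ 𝔖, ∀ c : K, T u = c • u →
      T ((B ^ n) u) - c • (B ^ n) u ∈ Uf n := by
    intro n
    induction n with
    | zero => intro T hT c hc; simp [hc]
    | succ n ih =>
      intro T hT c hc
      obtain ⟨c', hc'⟩ := heig _ (hcomm T hT)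
      have e1 : T ((B ^ (n + 1)) u) - c • (B ^ (n + 1)) u
          = B (T ((B ^ n) u) - c • (B ^ n) u)
            - ((B * T - T * B) ((B ^ n) u)) := by
        simp only [hpow n, LinearMap.sub_apply, Module.End.mul_apply, map_sub, map_smul]
        abel
      rw [e1]
      refine sub_mem (hBmap n _ (ih T hT c hc)) ?_
      have e2 : (B * T - T * B) ((B ^ n) u)
          = ((B * T - T * B) ((B ^ n) u) - c' • (B ^ n) u) + c' • (B ^ n) u := by abel
      rw [e2]
      exact add_mem (hmono n.le_succ (ih _ (hcomm T hT) c' hc'))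
        (Submodule.smul_mem _ _ (hgen n.lt_succ_self))
  have hTmap : ∀ T ∈ 𝔖, ∀ n, ∀ v ∈ Uf n, T v ∈ Uf n := by
    intro T hT n v hv
    obtain ⟨c, hc⟩ := heig T hT
    have hm : Submodule.map T (Uf n) ≤ Uf n := by
      simp only [hUf, Submodule.map_span, Submodule.span_le]
      rintro _ ⟨_, ⟨i, hi, rfl⟩, rfl⟩
      have e : T ((B ^ i) u)
          = (T ((B ^ i) u) - c • (B ^ i) u) + c • (B ^ i) u := by abel
      rw [e]
      exact add_mem (hmono (le_of_lt (by simpa using hi)) (key i T hT c hc))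
        (Submodule.smul_mem _ _ (Submodule.subset_span ⟨i, hi, rfl⟩))
    exact hm ⟨v, hv, rfl⟩
  have hstab : ∃ N, 0 < N ∧ (B ^ N) u ∈ Uf N := by
    by_contra hcon
    push_neg at hcon
    have hnot : ∀ N, (B ^ N) u ∉ Uf N := by
      intro N
      rcases Nat.eq_zero_or_pos N with h0 | h0
      · subst h0; rw [hUf0]; simpa using hu
      · exact hcon N h0
    have hlt : ∀ n, Uf n < Uf (n + 1) := by
      intro n
      refine lt_of_le_of_ne (hmono n.le_succ) (fun he => hnot n ?_)
      rw [he]; exact hgen n.lt_succ_self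
    have hrank : ∀ n, n ≤ finrank K (Uf n) := by
      intro n
      induction n with
      | zero => simp
      | succ n ih =>
        exact Nat.succ_le_of_lt
          (lt_of_le_of_lt ih (Submodule.finrank_lt_finrank_of_lt (hlt n)))
    have h1 := hrank (finrank K V + 1)
    have h2 := Submodule.finrank_le (Uf (finrank K V + 1))
    omega
  obtain ⟨N, hN0, hNst⟩ := hstab
  have hUle : Uf (N + 1) ≤ Uf N := by
    simp only [hUf, Submodule.span_le]
    rintro _ ⟨i, hi, rfl⟩
    simp only [Set.mem_Iio] at hi
    rcases Nat.lt_or_ge i N with hlt | hge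
    · exact hgen hlt
    · have : i = N := by omega
      subst this; exact hNst
  have hUB : ∀ v ∈ Uf N, B v ∈ Uf N := fun v hv => hUle (hBmap N v hv)
  intro T hT
  obtain ⟨c', hc'⟩ := heig _ (hcomm T hT)
  have hUT : ∀ v ∈ Uf N, T v ∈ Uf N := hTmap T hT N
  have hUC : ∀ v ∈ Uf N, (B * T - T * B) v ∈ Uf N := hTmap _ (hcomm T hT) N
  have hdown : ∀ n, ∀ v ∈ Uf (n + 1),
      (B * T - T * B - c' • (1 : Module.End K V)) v ∈ Uf n := by
    intro n v hv
    have hm : Submodule.map (B * T - T * B - c' • (1 : Module.End K V)) (Uf (n + 1))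
        ≤ Uf n := by
      simp only [hUf, Submodule.map_span, Submodule.span_le]
      rintro _ ⟨_, ⟨i, hi, rfl⟩, rfl⟩
      simp only [Set.mem_Iio] at hi
      have e : (B * T - T * B - c' • (1 : Module.End K V)) ((B ^ i) u)
          = (B * T - T * B) ((B ^ i) u) - c' • (B ^ i) u := by
        simp
      rw [e]
      exact hmono (Nat.lt_succ_iff.mp hi) (key i _ (hcomm T hT) c' hc')
    exact hm ⟨v, hv, rfl⟩
  have hnil : ∀ n, ∀ v ∈ Uf n,
      ((B * T - T * B - c' • (1 : Module.End K V)) ^ n) v = 0 := by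
    intro n
    induction n with
    | zero =>
      intro v hv
      rw [hUf0, Submodule.mem_bot] at hv
      simp [hv]
    | succ n ih =>
      intro v hv
      have e : ((B * T - T * B - c' • (1 : Module.End K V)) ^ (n + 1)) v
          = ((B * T - T * B - c' • (1 : Module.End K V)) ^ n)
              ((B * T - T * B - c' • (1 : Module.End K V)) v) := by
        rw [pow_succ]; rfl
      rw [e]
      exact ih _ (hdown n v hv)
  have hUD : ∀ v ∈ Uf N, (B * T - T * B - c' • (1 : Module.End K V)) v ∈ Uf N :=
    fun v hv => hdown N v (hmono N.le_succ hv)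
  have htr1 : LinearMap.trace K (Uf N) ((B * T - T * B).restrict hUC) = 0 := by
    have e : (B * T - T * B).restrict hUC
        = B.restrict hUB * T.restrict hUT - T.restrict hUT * B.restrict hUB := by
      apply LinearMap.ext; intro v; apply Subtype.ext
      simp [LinearMap.restrict_coe_apply, Module.End.mul_apply, LinearMap.sub_apply]
    rw [e, map_sub, LinearMap.trace_mul_comm, sub_self]
  have hnilD : IsNilpotent ((B * T - T * B - c' • (1 : Module.End K V)).restrict hUD) := by
    refine ⟨N, ?_⟩
    rw [Module.End.pow_restrict]
    apply LinearMap.ext; intro v; apply Subtype.ext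
    simpa [LinearMap.restrict_coe_apply] using hnil N v.1 v.2
  have htrD : LinearMap.trace K (Uf N)
      ((B * T - T * B - c' • (1 : Module.End K V)).restrict hUD) = 0 :=
    (LinearMap.isNilpotent_trace_of_isNilpotent hnilD).eq_zero
  have hsplit : (B * T - T * B).restrict hUC
      = (B * T - T * B - c' • (1 : Module.End K V)).restrict hUD
        + c' • (1 : Module.End K (Uf N)) := by
    apply LinearMap.ext; intro v; apply Subtype.ext
    simp [LinearMap.restrict_coe_apply]
  have htrC : (0 : K) = c' * (finrank K (Uf N) : K) := by
    rw [← htr1, hsplit, map_add, htrD, zero_add, map_smul, LinearMap.trace_one,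
      smul_eq_mul]
  have hrankpos : 0 < finrank K (Uf N) := by
    have huU : u ∈ Uf N := by
      have := hgen (i := 0) hN0
      simpa using this
    have hle : Submodule.span K {u} ≤ Uf N := by
      rw [Submodule.span_singleton_le_iff_mem]; exact huU
    have h1 : finrank K (Submodule.span K {u}) = 1 := finrank_span_singleton hu
    have := Submodule.finrank_mono hle
    omega
  have hc0 : c' = 0 := by
    rcases mul_eq_zero.mp htrC.symm with h | h
    · exact h
    · exact absurd h (Nat.cast_ne_zero.mpr hrankpos.ne')
  rw [hc', hc0, zero_smul]

/-- Proposition 2.3 (2.22)/(2.27): for u ∈ (U_φ ∩ U_ψ) \ V^{ann,+},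
    g_h(x)(u) ∈ U_φ. -/
theorem stmt_9 {K : Type*} [Field K] [IsAlgClosed K] [CharZero K]
    {S : Type*} [Nonempty S]
    {L : Type*} [AddCommGroup L] [Module K L]
    {V : Type*} [AddCommGroup V] [Module K V] [FiniteDimensional K V]
    (br : S → L →ₗ[K] L →ₗ[K] L)
    (hjac : ∀ (s h : S) (x y z : L),
      br h (br s x y) z = br s x (br h y z) + br s (br h x z) y)
    (hsw : ∀ (s h : S) (x y z : L), br h (br s x y) z = br s (br h x y) z)
    (A : Submodule K L) (x : L) (hx : x ∉ A)
    (hcompl : IsCompl A (Submodule.span K {x}))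
    (hideal : ∀ (s : S), ∀ a ∈ A, ∀ z : L, br s a z ∈ A ∧ br s z a ∈ A)
    (hLL : ∀ (s : S) (a b : L), br s a b ∈ A)
    (f g : S → L →ₗ[K] Module.End K V)
    (hf : ∀ (h k : S) (x y : L), f h (br k x y) = f h x * f k y - f k y * f h x)
    (hg : ∀ (h k : S) (x y : L), g h (br k x y) = g h x * f k y - f k y * g h x)
    (hgg : ∀ (h k : S) (x y : L),
      g k x * g h y = g h x * f k y ∧ g h x * f k y = g k x * f h y)
    (hff : ∀ (h k : S) (x y : L), f k x * f h y = f h x * f k y)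
    (hfg : ∀ (h k : S) (x y : L), f k x * g h y = f h x * g k y)
    (φ ψ : S → A → K) (u : V)
    (hfu : ∀ (k : S) (a : A), f k a.1 u = φ k a • u)
    (hgu : ∀ (k : S) (a : A), g k a.1 u = ψ k a • u)
    (hann : u ∉ Submodule.span K
      {w : V | ∃ (s t : S) (y : L) (v : V), w = (g s y - f t y) v}) :
    ∀ (h : S), ∀ (k : S) (a : A),
      f k a.1 (g h x u) = φ k a • g h x u := by
  have hu : u ≠ 0 := fun h0 => hann (h0 ▸ Submodule.zero_mem _)
  intro h k a
  set 𝔖 : Set (Module.End K V) := {T | ∃ (j : S) (c : L), ∃ _ : c ∈ A, T = f j c}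
    with h𝔖
  have heig : ∀ T ∈ 𝔖, ∃ c0 : K, T u = c0 • u := by
    rintro T ⟨j, c, hcA, rfl⟩
    exact ⟨φ j ⟨c, hcA⟩, hfu j ⟨c, hcA⟩⟩
  have hcomm : ∀ T ∈ 𝔖, f h x * T - T * f h x ∈ 𝔖 := by
    rintro T ⟨j, c, hcA, rfl⟩
    exact ⟨h, br j x c, (hideal j c hcA x).2, (hf h j x c).symm⟩
  have hzero := aux_comm_eigen_zero (f h x) 𝔖 u hu heig hcomm (f k a.1)
    ⟨k, a.1, a.2, rfl⟩
  have hb : br k x a.1 ∈ A := (hideal k a.1 a.2 x).2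
  have hfb : f h (br k x a.1) u = 0 := by
    rw [hf h k x a.1]; exact hzero
  have hφ : φ h ⟨br k x a.1, hb⟩ = 0 := by
    have e := hfu h ⟨br k x a.1, hb⟩
    rw [hfb] at e
    exact (smul_eq_zero.mp e.symm).resolve_right hu
  have hψφ : ψ h ⟨br k x a.1, hb⟩ = φ h ⟨br k x a.1, hb⟩ := by
    by_contra hne
    have hd : ψ h ⟨br k x a.1, hb⟩ - φ h ⟨br k x a.1, hb⟩ ≠ 0 := sub_ne_zero.mpr hne
    apply hann
    have hw : (g h (br k x a.1) - f h (br k x a.1)) u ∈ Submodule.span K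
        {w : V | ∃ (s t : S) (y : L) (v : V), w = (g s y - f t y) v} :=
      Submodule.subset_span ⟨h, h, br k x a.1, u, rfl⟩
    have hweq : (g h (br k x a.1) - f h (br k x a.1)) u
        = (ψ h ⟨br k x a.1, hb⟩ - φ h ⟨br k x a.1, hb⟩) • u := by
      rw [LinearMap.sub_apply, hgu h ⟨br k x a.1, hb⟩, hfu h ⟨br k x a.1, hb⟩,
        sub_smul]
    have e : u = (ψ h ⟨br k x a.1, hb⟩ - φ h ⟨br k x a.1, hb⟩)⁻¹
        • ((g h (br k x a.1) - f h (br k x a.1)) u) := by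
      rw [hweq, smul_smul, inv_mul_cancel₀ hd, one_smul]
    rw [e]
    exact Submodule.smul_mem _ _ hw
  have hgb : g h (br k x a.1) u = 0 := by
    rw [hgu h ⟨br k x a.1, hb⟩, hψφ, hφ, zero_smul]
  have happ : g h (br k x a.1) u = g h x (f k a.1 u) - f k a.1 (g h x u) := by
    rw [hg h k x a.1]; rfl
  rw [hgb] at happ
  have e2 : f k a.1 (g h x u) = g h x (f k a.1 u) := (sub_eq_zero.mp happ.symm).symm
  rw [e2, hfu k a, map_smul]
end

section
/- Let L be a finite-dimensional solvable Lie-like algebra^{2-nd} over an algebraically closed field k of characteristic 0, with dim L ≥ 1. Then L ≠ 𝒟²L where 𝒟²L := Σ_{s∈S} ⟨L, L⟩_s, and consequently there exist an ideal 𝒜 of L and x ∈ L \\ 𝒜 such that ⟨L,L⟩_s ⊆ 𝒜 for all s ∈ S and L = 𝒜 ⊕ k·x as vector spaces. -/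
/-- The derived series of a Lie-like algebra^{2-nd}: 𝒟¹L = L,
    𝒟^{n+1}L = Σ_s ⟨𝒟ⁿL, 𝒟ⁿL⟩_s.  (Index shifted: `Dseries br 0 = 𝒟¹L`.) -/
def Dseries {K S L : Type*} [Field K] [AddCommGroup L] [Module K L]
    (br : S → L →ₗ[K] L →ₗ[K] L) : ℕ → Submodule K L
  | 0 => ⊤
  | n + 1 => ⨆ s : S, Submodule.span K
      {w : L | ∃ a ∈ Dseries br n, ∃ b ∈ Dseries br n, w = br s a b}

/-- For a finite-dimensional solvable Lie-like algebra^{2-nd} with dim L ≥ 1,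
    L ≠ 𝒟²L, and there is a codimension-one ideal 𝒜 containing all brackets with
    L = 𝒜 ⊕ k·x. -/
theorem stmt_11 {K : Type*} [Field K] [IsAlgClosed K] [CharZero K]
    {S : Type*} [Nonempty S]
    {L : Type*} [AddCommGroup L] [Module K L] [FiniteDimensional K L]
    (br : S → L →ₗ[K] L →ₗ[K] L)
    (hjac : ∀ (s h : S) (x y z : L),
      br h (br s x y) z = br s x (br h y z) + br s (br h x z) y)
    (hsw : ∀ (s h : S) (x y z : L), br h (br s x y) z = br s (br h x y) z)
    (hsolv : ∃ n : ℕ, Dseries br n = ⊥)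
    (hdim : 1 ≤ Module.finrank K L) :
    Dseries br 1 ≠ ⊤ ∧
    ∃ (A : Submodule K L) (x : L),
      x ∉ A ∧
      (∀ (s : S) (a b : L), br s a b ∈ A) ∧
      (∀ (s : S), ∀ a ∈ A, ∀ z : L, br s a z ∈ A ∧ br s z a ∈ A) ∧
      IsCompl A (Submodule.span K {x}) := by
  have hne : Dseries br 1 ≠ ⊤ := by
    intro h
    have hall : ∀ n, Dseries br n = ⊤ := by
      intro n
      induction n with
      | zero => rfl
      | succ n ih =>
        show (⨆ s : S, Submodule.span K
          {w : L | ∃ a ∈ Dseries br n, ∃ b ∈ Dseries br n, w = br s a b}) = ⊤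
        rw [ih]
        simpa [Dseries] using h
    obtain ⟨n, hn⟩ := hsolv
    have : Nontrivial L := Module.nontrivial_of_finrank_pos (by omega : 0 < Module.finrank K L)
    rw [hall n] at hn
    exact top_ne_bot hn
  refine ⟨hne, ?_⟩
  have hmem : ∀ (s : S) (a b : L), br s a b ∈ Dseries br 1 := by
    intro s a b
    refine le_iSup (fun s : S => Submodule.span K
      {w : L | ∃ a ∈ Dseries br 0, ∃ b ∈ Dseries br 0, w = br s a b}) s ?_
    exact Submodule.subset_span ⟨a, trivial, b, trivial, rfl⟩
  obtain ⟨f, hf, hmap⟩ := (Dseries br 1).exists_dual_map_eq_bot_of_lt_top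
    (lt_top_iff_ne_top.mpr hne) inferInstance
  obtain ⟨x, hx⟩ : ∃ x, f x ≠ 0 := by
    by_contra h; push_neg at h; exact hf (by ext v; simpa using h v)
  have hle : Dseries br 1 ≤ LinearMap.ker f := by
    intro y hy
    have : f y ∈ (Dseries br 1).map f := ⟨y, hy, rfl⟩
    rw [hmap] at this
    simpa using this
  refine ⟨LinearMap.ker f, x, by simpa using hx, fun s a b => hle (hmem s a b),
    fun s a _ z => ⟨hle (hmem s a z), hle (hmem s z a)⟩, ?_⟩
  have hx0 : x ≠ 0 := fun h => hx (by simp [h])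
  refine Module.Dual.isCompl_ker_of_disjoint_of_ne_bot hf ?_ ?_
  · rw [Submodule.disjoint_span_singleton' hx0]
    simpa using hx
  · simpa using hx0
end

section
/- Let L be a Lie-like algebra^{2-nd} induced by S over a field of characteristic 0, and let (V, {f_k}, {g_k}) be a finite-dimensional ordinary L-module. Suppose L = 𝒜 ⊕ k·x with 𝒜 an ideal and ⟨L,L⟩_s ⊆ 𝒜 for all s. In the situation where f_h(x)(u) = g_h(x)(u) for all h ∈ S and all u in U := U_φ ∩ U_ψ (the joint eigenspace for f_k(𝒜) with functionals φ_k and g_k(𝒜) with functionals ψ_k, assumed to satisfy U ∩ V^{ann,+} = 0 and U ≠ 0), the subspace U is invariant under g_h(x) for every h ∈ S. -/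
/-- Abstract form of Lie's lemma (trace argument): if `u ≠ 0` is a common
eigenvector of the family `F` with eigenvalues `χ`, the family is closed
under commutation with `X`, and `F j₀` is a commutator of `X` with some
member of the family, then `χ j₀ = 0`. -/
theorem chi_zero_of_comm {K : Type*} [Field K] [CharZero K]
    {V : Type*} [AddCommGroup V] [Module K V] [FiniteDimensional K V]
    {ι : Type*} (u : V) (hu : u ≠ 0) (X : Module.End K V)
    (F : ι → Module.End K V) (χ : ι → K)
    (heig : ∀ i, F i u = χ i • u)
    (hcomm : ∀ i, ∃ j, X * F i - F i * X = F j)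
    (i₀ j₀ : ι)
    (h₀ : F j₀ = X * F i₀ - F i₀ * X ∨ F j₀ = F i₀ * X - X * F i₀) :
    χ j₀ = 0 := by
  classical
  set Wn : ℕ → Submodule K V :=
    fun n => Submodule.span K ((fun j : ℕ => (X ^ j) u) '' Set.Iio n) with hWndef
  have hWn_mono : Monotone Wn := fun m n hmn =>
    Submodule.span_mono (Set.image_mono (Set.Iio_subset_Iio hmn))
  have hgen : ∀ {n j : ℕ}, j < n → (X ^ j) u ∈ Wn n := fun {n j} h =>
    Submodule.subset_span ⟨j, h, rfl⟩
  have hXmap : ∀ {n : ℕ} {w : V}, w ∈ Wn n → X w ∈ Wn (n + 1) := by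
    intro n w hw
    have hle : Submodule.map X (Wn n) ≤ Wn (n + 1) := by
      rw [hWndef, Submodule.map_span_le]
      rintro m ⟨j, hj, rfl⟩
      have hxx : X ((X ^ j) u) = (X ^ (j + 1)) u := by
        rw [pow_succ', Module.End.mul_apply]
      rw [hxx]
      exact hgen (Nat.succ_lt_succ hj)
    exact hle (Submodule.mem_map_of_mem hw)
  -- the key triangularity statement
  have key : ∀ (n : ℕ) (i : ι), F i ((X ^ n) u) - χ i • (X ^ n) u ∈ Wn n := by
    intro n
    induction n with
    | zero =>
      intro i
      simp only [pow_zero, Module.End.one_apply, heig i, sub_self]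
      exact zero_mem _
    | succ n ih =>
      intro i
      obtain ⟨j, hj⟩ := hcomm i
      have hFiX : ∀ v, F i (X v) = X (F i v) - F j v := by
        intro v
        have h1 : X (F i v) - F i (X v) = F j v := by
          have := congrArg (fun T : Module.End K V => T v) hj
          simpa [LinearMap.sub_apply, Module.End.mul_apply] using this
        have h2 : X (F i v) = F j v + F i (X v) := sub_eq_iff_eq_add.mp h1
        rw [h2]; abel
      have e1 : (X ^ (n + 1)) u = X ((X ^ n) u) := by
        rw [pow_succ', Module.End.mul_apply]
      have h2 : F i ((X ^ (n + 1)) u) - χ i • (X ^ (n + 1)) u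
          = X (F i ((X ^ n) u) - χ i • (X ^ n) u)
            - (F j ((X ^ n) u) - χ j • (X ^ n) u) - χ j • (X ^ n) u := by
        rw [e1, hFiX ((X ^ n) u), map_sub, map_smul]
        abel
      rw [h2]
      exact sub_mem (sub_mem (hXmap (ih i)) (hWn_mono n.le_succ (ih j)))
        (Submodule.smul_mem _ _ (hgen (Nat.lt_succ_self n)))
  -- stabilization of the chain
  obtain ⟨N, hN⟩ :=
    (monotone_stabilizes_iff_noetherian.mpr inferInstance) ⟨Wn, hWn_mono⟩
  set W : Submodule K V := Wn N with hWdef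
  have hle : ∀ n, Wn n ≤ W := by
    intro n
    rcases le_total n N with h | h
    · exact hWn_mono h
    · exact (hN n h).ge
  have hXW : ∀ w ∈ W, X w ∈ W := by
    intro w hw
    exact (hN (N + 1) (Nat.le_succ N)).ge (hXmap hw)
  have hpow_mem : ∀ n, (X ^ n) u ∈ W := fun n =>
    hle (n + 1) (hgen (Nat.lt_succ_self n))
  have humem : u ∈ W := by
    have := hpow_mem 0
    rwa [pow_zero, Module.End.one_apply] at this
  -- the "strictly triangular" parts
  set G : ι → Module.End K V := fun i => F i - χ i • 1 with hGdef
  have hGval : ∀ i v, G i v = F i v - χ i • v := by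
    intro i v
    simp [hGdef, LinearMap.sub_apply, LinearMap.smul_apply, Module.End.one_apply]
  have hdown : ∀ (i : ι) (n : ℕ) (w : V), w ∈ Wn (n + 1) → G i w ∈ Wn n := by
    intro i n w hw
    have hmap : Submodule.map (G i) (Wn (n + 1)) ≤ Wn n := by
      rw [hWndef, Submodule.map_span_le]
      rintro m ⟨j, hj, rfl⟩
      have : G i ((X ^ j) u) = F i ((X ^ j) u) - χ i • (X ^ j) u := hGval i _
      rw [this]
      exact hWn_mono (Nat.lt_succ_iff.mp hj) (key j i)
    exact hmap (Submodule.mem_map_of_mem hw)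
  have hGW : ∀ (i : ι), ∀ w ∈ W, G i w ∈ W := by
    intro i w hw
    exact hle N (hdown i N w (hWn_mono N.le_succ hw))
  have hFW : ∀ (i : ι), ∀ w ∈ W, F i w ∈ W := by
    intro i w hw
    have h1 := hGW i w hw
    have h2 : F i w = G i w + χ i • w := by rw [hGval]; abel
    rw [h2]
    exact add_mem h1 (W.smul_mem _ hw)
  have hGzero : ∀ (i : ι) (n : ℕ) (w : V), w ∈ Wn n → ((G i) ^ n) w = 0 := by
    intro i n
    induction n with
    | zero =>
      intro w hw
      have hbot : Wn 0 = ⊥ := by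
        show Submodule.span K ((fun j : ℕ => (X ^ j) u) '' Set.Iio 0) = ⊥
        have himg : ((fun j : ℕ => (X ^ j) u) '' Set.Iio 0) = (∅ : Set V) := by
          ext v; simp
        rw [himg, Submodule.span_empty]
      rw [hbot, Submodule.mem_bot] at hw
      simp [hw]
    | succ n ih =>
      intro w hw
      rw [pow_succ, Module.End.mul_apply]
      exact ih _ (hdown i n w hw)
  -- restrictions to W
  set X' : Module.End K W := X.restrict hXW with hX'def
  set F' : ι → Module.End K W := fun i => (F i).restrict (hFW i) with hF'def
  set G' : Module.End K W := (G j₀).restrict (hGW j₀) with hG'def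
  have hG'coe : ∀ w : W, ((G' w : W) : V) = G j₀ (w : V) := fun w =>
    LinearMap.restrict_coe_apply _ _ _
  have hGpow : ∀ (m : ℕ) (w : W), ((G' ^ m) w : V) = ((G j₀) ^ m) (w : V) := by
    intro m
    induction m with
    | zero => intro w; simp
    | succ m ih =>
      intro w
      rw [pow_succ, pow_succ, Module.End.mul_apply, Module.End.mul_apply,
        ih (G' w), hG'coe]
  have hGnil : IsNilpotent G' := by
    refine ⟨N, ?_⟩
    ext w
    simp only [LinearMap.zero_apply, ZeroMemClass.coe_zero]
    rw [hGpow N w]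
    exact hGzero j₀ N w.1 w.2
  -- trace computations
  have hdecomp : F' j₀ = χ j₀ • (1 : Module.End K W) + G' := by
    ext w
    have h1 : ((F' j₀ w : W) : V) = F j₀ (w : V) :=
      LinearMap.restrict_coe_apply _ _ _
    have h2 : (((χ j₀ • (1 : Module.End K W) + G') w : W) : V)
        = χ j₀ • (w : V) + G j₀ (w : V) := by
      simp [LinearMap.add_apply, LinearMap.smul_apply, Module.End.one_apply,
        hG'coe]
    rw [h1, h2, hGval]
    abel
  have htrG : LinearMap.trace K W G' = 0 := by
    have := LinearMap.isNilpotent_trace_of_isNilpotent hGnil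
    exact this.eq_zero
  have htrF : LinearMap.trace K W (F' j₀) = (Module.finrank K W : K) * χ j₀ := by
    rw [hdecomp, map_add, map_smul, LinearMap.trace_one, htrG, add_zero,
      smul_eq_mul, mul_comm]
  have hres : F' j₀ = X' * F' i₀ - F' i₀ * X' ∨
      F' j₀ = F' i₀ * X' - X' * F' i₀ := by
    rcases h₀ with h | h
    · left
      ext w
      have := congrArg (fun T : Module.End K V => T (w : V)) h
      simpa [LinearMap.sub_apply, Module.End.mul_apply, AddSubgroupClass.coe_sub,
        LinearMap.restrict_coe_apply, hF'def, hX'def] using this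
    · right
      ext w
      have := congrArg (fun T : Module.End K V => T (w : V)) h
      simpa [LinearMap.sub_apply, Module.End.mul_apply, AddSubgroupClass.coe_sub,
        LinearMap.restrict_coe_apply, hF'def, hX'def] using this
  have htr0 : LinearMap.trace K W (F' j₀) = 0 := by
    rcases hres with h | h <;>
      rw [h, map_sub, LinearMap.trace_mul_comm, sub_self]
  have hfr : (Module.finrank K W : K) * χ j₀ = 0 := by rw [← htrF, htr0]
  have hpos : 0 < Module.finrank K W := by
    refine Module.finrank_pos_iff.mpr ?_
    exact ⟨⟨u, humem⟩, 0, by simpa [Subtype.ext_iff] using hu⟩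
  have hne' : (Module.finrank K W : K) ≠ 0 :=
    Nat.cast_ne_zero.mpr hpos.ne'
  exact (mul_eq_zero.mp hfr).resolve_left hne'

/-- Case 2 of the proof of the main theorem: if f_h(x) = g_h(x) on
    U = U_φ ∩ U_ψ, U ∩ V^{ann,+} = 0 and U ≠ 0, then U is invariant under
    g_h(x) for every h. -/
theorem stmt_17 {K : Type*} [Field K] [IsAlgClosed K] [CharZero K]
    {S : Type*} [Nonempty S]
    {L : Type*} [AddCommGroup L] [Module K L]
    {V : Type*} [AddCommGroup V] [Module K V] [FiniteDimensional K V]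
    (br : S → L →ₗ[K] L →ₗ[K] L)
    (hjac : ∀ (s h : S) (x y z : L),
      br h (br s x y) z = br s x (br h y z) + br s (br h x z) y)
    (hsw : ∀ (s h : S) (x y z : L), br h (br s x y) z = br s (br h x y) z)
    (A : Submodule K L) (x : L) (hx : x ∉ A)
    (hcompl : IsCompl A (Submodule.span K {x}))
    (hideal : ∀ (s : S), ∀ a ∈ A, ∀ z : L, br s a z ∈ A ∧ br s z a ∈ A)
    (hLL : ∀ (s : S) (a b : L), br s a b ∈ A)
    (f g : S → L →ₗ[K] Module.End K V)
    (hf : ∀ (h k : S) (x y : L), f h (br k x y) = f h x * f k y - f k y * f h x)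
    (hg : ∀ (h k : S) (x y : L), g h (br k x y) = g h x * f k y - f k y * g h x)
    (hgg : ∀ (h k : S) (x y : L),
      g k x * g h y = g h x * f k y ∧ g h x * f k y = g k x * f h y)
    (hff : ∀ (h k : S) (x y : L), f k x * f h y = f h x * f k y)
    (hfg : ∀ (h k : S) (x y : L), f k x * g h y = f h x * g k y)
    (φ ψ : S → A → K)
    (heq : ∀ (h : S) (u : V),
      (∀ (k : S) (a : A), f k a.1 u = φ k a • u) →
      (∀ (k : S) (a : A), g k a.1 u = ψ k a • u) →
      f h x u = g h x u)
    (hcap : ∀ u : V,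
      (∀ (k : S) (a : A), f k a.1 u = φ k a • u) →
      (∀ (k : S) (a : A), g k a.1 u = ψ k a • u) →
      u ∈ Submodule.span K
        {w : V | ∃ (s t : S) (y : L) (v : V), w = (g s y - f t y) v} →
      u = 0)
    (hne : ∃ u : V, u ≠ 0 ∧
      (∀ (k : S) (a : A), f k a.1 u = φ k a • u) ∧
      (∀ (k : S) (a : A), g k a.1 u = ψ k a • u)) :
    ∀ (h : S) (u : V),
      (∀ (k : S) (a : A), f k a.1 u = φ k a • u) →
      (∀ (k : S) (a : A), g k a.1 u = ψ k a • u) →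
      (∀ (k : S) (a : A), f k a.1 (g h x u) = φ k a • g h x u) ∧
      (∀ (k : S) (a : A), g k a.1 (g h x u) = ψ k a • g h x u) := by
  obtain ⟨u₀, hu₀, hf₀, hg₀⟩ := hne
  -- the two families of weights coincide
  have hφψ : ∀ (s t : S) (b : A), ψ s b = φ t b := by
    intro s t b
    have hval : (ψ s b - φ t b) • u₀ = (g s b.1 - f t b.1) u₀ := by
      rw [LinearMap.sub_apply, hg₀ s b, hf₀ t b, sub_smul]
    have hmem : ((ψ s b - φ t b) • u₀) ∈ Submodule.span K
        {w : V | ∃ (s t : S) (y : L) (v : V), w = (g s y - f t y) v} := by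
      rw [hval]
      exact Submodule.subset_span ⟨s, t, b.1, u₀, rfl⟩
    have h0 : (ψ s b - φ t b) • u₀ = 0 := by
      refine hcap _ ?_ ?_ hmem
      · intro k a
        rw [map_smul, hf₀ k a, smul_comm]
      · intro k a
        rw [map_smul, hg₀ k a, smul_comm]
    rcases smul_eq_zero.mp h0 with h | h
    · exact sub_eq_zero.mp h
    · exact absurd h hu₀
  intro h u hfu hgu
  -- the family indexed by S × A, with X = f h x
  set X : Module.End K V := f h x with hXdef
  set F : S × A → Module.End K V := fun p => f p.1 p.2.1 with hFdef
  set χ : S × A → K := fun p => φ p.1 p.2 with hχdef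
  have heig : ∀ p : S × A, F p u₀ = χ p • u₀ := fun p => hf₀ p.1 p.2
  have hcomm : ∀ p : S × A, ∃ q : S × A, X * F p - F p * X = F q := by
    intro p
    refine ⟨(h, ⟨br p.1 x p.2.1, (hideal p.1 p.2.1 p.2.2 x).2⟩), ?_⟩
    exact (hf h p.1 x p.2.1).symm
  -- the vanishing of φ on the relevant commutators
  have hchi : ∀ (j₀ i₀ : S × A),
      ((f j₀.1 j₀.2.1 = f h x * f i₀.1 i₀.2.1 - f i₀.1 i₀.2.1 * f h x) ∨
       (f j₀.1 j₀.2.1 = f i₀.1 i₀.2.1 * f h x - f h x * f i₀.1 i₀.2.1)) →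
      φ j₀.1 j₀.2 = 0 := by
    intro j₀ i₀ h₀
    exact chi_zero_of_comm u₀ hu₀ (f h x) F χ heig hcomm i₀ j₀ h₀
  constructor
  · intro k a
    have hgf : g h x u = f h x u := (heq h u hfu hgu).symm
    rw [hgf]
    have hz : φ h ⟨br k x a.1, (hideal k a.1 a.2 x).2⟩ = 0 :=
      hchi (h, ⟨br k x a.1, (hideal k a.1 a.2 x).2⟩) (k, a)
        (Or.inl (hf h k x a.1))
    have e : f k a.1 (f h x u) = f h x (f k a.1 u) - f h (br k x a.1) u := by
      have hc := congrArg (fun T : Module.End K V => T u) (hf h k x a.1)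
      simp only [LinearMap.sub_apply, Module.End.mul_apply] at hc
      rw [hc]; abel
    rw [e, hfu k a, map_smul]
    rw [show f h (br k x a.1) u
        = φ h ⟨br k x a.1, (hideal k a.1 a.2 x).2⟩ • u
      from hfu h ⟨br k x a.1, (hideal k a.1 a.2 x).2⟩, hz, zero_smul, sub_zero]
  · intro k a
    have hgf : g h x u = f h x u := (heq h u hfu hgu).symm
    rw [hgf]
    have hz : φ h ⟨br h a.1 x, (hideal h a.1 a.2 x).1⟩ = 0 :=
      hchi (h, ⟨br h a.1 x, (hideal h a.1 a.2 x).1⟩) (h, a)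
        (Or.inr (hf h h a.1 x))
    have hz' : ψ k ⟨br h a.1 x, (hideal h a.1 a.2 x).1⟩ = 0 := by
      rw [hφψ k h ⟨br h a.1 x, (hideal h a.1 a.2 x).1⟩, hz]
    have e : g k a.1 (f h x u) = f h x (g k a.1 u) + g k (br h a.1 x) u := by
      have hc := congrArg (fun T : Module.End K V => T u) (hg k h a.1 x)
      simp only [LinearMap.sub_apply, Module.End.mul_apply] at hc
      rw [eq_sub_iff_add_eq] at hc
      rw [← hc]; abel
    rw [e, hgu k a, map_smul]
    rw [show g k (br h a.1 x) u
        = ψ k ⟨br h a.1 x, (hideal h a.1 a.2 x).1⟩ • u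
      from hgu k ⟨br h a.1 x, (hideal h a.1 a.2 x).1⟩, hz', zero_smul, add_zero]
end
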